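/- arXiv:1511.07789 — 7 statements merged into one kernel-verified Lean document; each statement's English description precedes it below -/
import Mathlib

section
/- Let k be a field and R = k[x_1,x_2]. If L_1,…,L_r ∈ R_1 (r ≥ 2) are linear forms that are pairwise linearly independent (no two proportional), then the ideal J = (L_2L_3⋯L_r, L_1L_3⋯L_r, …, L_1L_2⋯L_{r−1}), generated by the r products of all but one of the L_i, equals (x_1,x_2)^{r−1}, the (r−1)-st power of the irrelevant maximal ideal. -/
open MvPolynomial Finset Pointwise

section aux
variable {k : Type*} [Field k]

lemma degree_fin2 (d : Fin 2 →₀ ℕ) : d.degree = d 0 + d 1 := by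
  rw [Finsupp.degree_apply, Finset.sum_subset (Finset.subset_univ d.support)
    (fun i _ hi => Finsupp.notMem_support_iff.mp hi), Fin.sum_univ_two]

lemma deg_one_cases (d : Fin 2 →₀ ℕ) (hd : d.degree = 1) :
    d = Finsupp.single 0 1 ∨ d = Finsupp.single 1 1 := by
  rw [degree_fin2] at hd
  rcases show d 0 = 0 ∧ d 1 = 1 ∨ d 0 = 1 ∧ d 1 = 0 by omega with ⟨h0, h1⟩ | ⟨h0, h1⟩
  · right
    ext i; fin_cases i <;> simp [h0, h1, Finsupp.single_apply]
  · left
    ext i; fin_cases i <;> simp [h0, h1, Finsupp.single_apply]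

lemma lin_form {p : MvPolynomial (Fin 2) k} (hp : p.IsHomogeneous 1) :
    p = C (coeff (Finsupp.single 0 1) p) * X 0 + C (coeff (Finsupp.single 1 1) p) * X 1 := by
  have hne : (Finsupp.single 0 1 : Fin 2 →₀ ℕ) ≠ Finsupp.single 1 1 := by
    intro h; have := DFunLike.congr_fun h 0; simp at this
  apply MvPolynomial.ext
  intro d
  rw [coeff_add, coeff_C_mul, coeff_C_mul, coeff_X', coeff_X']
  by_cases hd : d.degree = 1
  · rcases deg_one_cases d hd with h | h <;> subst h <;> simp [hne, hne.symm]
  · rw [hp.coeff_eq_zero hd]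
    have h0 : Finsupp.single 0 1 ≠ d := by
      rintro rfl; exact hd (by simp [degree_fin2, Finsupp.single_apply])
    have h1 : Finsupp.single 1 1 ≠ d := by
      rintro rfl; exact hd (by simp [degree_fin2, Finsupp.single_apply])
    simp [h0, h1]

lemma eval_lin {p : MvPolynomial (Fin 2) k} (hp : p.IsHomogeneous 1) (pt : Fin 2 → k) :
    eval pt p = coeff (Finsupp.single 0 1) p * pt 0 + coeff (Finsupp.single 1 1) p * pt 1 := by
  conv_lhs => rw [lin_form hp]
  simp

lemma det_ne_zero {p q : MvPolynomial (Fin 2) k} (hp : p.IsHomogeneous 1) (hq : q.IsHomogeneous 1)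
    (h : LinearIndependent k ![p, q]) :
    coeff (Finsupp.single 0 1) p * coeff (Finsupp.single 1 1) q -
      coeff (Finsupp.single 0 1) q * coeff (Finsupp.single 1 1) p ≠ 0 := by
  intro hdet
  have hp0 : p ≠ 0 := by simpa using h.ne_zero 0
  obtain ⟨c, hca, hcb⟩ : ∃ c : k,
      coeff (Finsupp.single 0 1) q = c * coeff (Finsupp.single 0 1) p ∧
      coeff (Finsupp.single 1 1) q = c * coeff (Finsupp.single 1 1) p := by
    by_cases ha : coeff (Finsupp.single 0 1) p = 0
    · have hb : coeff (Finsupp.single 1 1) p ≠ 0 := by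
        intro hb; exact hp0 (by rw [lin_form hp, ha, hb]; simp)
      refine ⟨coeff (Finsupp.single 1 1) q / coeff (Finsupp.single 1 1) p, ?_, ?_⟩
      · rw [ha, mul_zero]
        have : coeff (Finsupp.single 0 1) q * coeff (Finsupp.single 1 1) p = 0 := by
          linear_combination -hdet + coeff (Finsupp.single 1 1) q * ha
        exact (mul_eq_zero.mp this).resolve_right hb
      · field_simp
    · refine ⟨coeff (Finsupp.single 0 1) q / coeff (Finsupp.single 0 1) p, ?_, ?_⟩
      · field_simp
      · field_simp
        linear_combination hdet
  have hc : q = C c * p := by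
    rw [lin_form hq, lin_form hp, hca, hcb, C_mul, C_mul]; ring
  have := (LinearIndependent.pair_iff.mp h) c (-1)
    (by rw [smul_eq_C_mul, smul_eq_C_mul, hc, map_neg, map_one]; ring)
  exact absurd this.2 (by norm_num)

lemma setpow (n : ℕ) : ∀ x ∈ ({X 0, X 1} : Set (MvPolynomial (Fin 2) k)) ^ n,
    ∃ a ≤ n, x = X 0 ^ a * X 1 ^ (n - a) := by
  induction n with
  | zero =>
    intro x hx
    simp only [pow_zero, Set.mem_one] at hx
    exact ⟨0, le_refl 0, by simp [hx]⟩
  | succ n ih =>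
    intro x hx
    rw [pow_succ] at hx
    obtain ⟨y, hy, z, hz, rfl⟩ := Set.mem_mul.mp hx
    obtain ⟨a, ha, rfl⟩ := ih y hy
    rcases hz with rfl | rfl
    · refine ⟨a + 1, by omega, ?_⟩
      rw [show n + 1 - (a + 1) = n - a by omega]
      ring
    · refine ⟨a, by omega, ?_⟩
      rw [show n + 1 - a = (n - a) + 1 by omega]
      ring

end aux

/-- In `k[x₁,x₂]`, for pairwise linearly independent linear forms `L 1, …, L r` (`r ≥ 2`),
the ideal generated by the products of all but one of the `L i` equals the `(r-1)`-st power
of the irrelevant maximal ideal `(x₁, x₂)`. -/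
theorem stmt1 {k : Type*} [Field k] {r : ℕ} (hr : 2 ≤ r)
    (L : Fin r → MvPolynomial (Fin 2) k) (hL : ∀ i, (L i).IsHomogeneous 1)
    (hind : ∀ i j, i ≠ j → LinearIndependent k ![L i, L j]) :
    Ideal.span (Set.range fun i : Fin r => ∏ j ∈ Finset.univ.erase i, L j)
      = (Ideal.span {(X 0 : MvPolynomial (Fin 2) k), X 1}) ^ (r - 1) := by
  classical
  set n := r - 1 with hn
  set I : Ideal (MvPolynomial (Fin 2) k) := Ideal.span {X 0, X 1} with hI
  set a : Fin r → k := fun i => coeff (Finsupp.single 0 1) (L i) with ha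
  set b : Fin r → k := fun i => coeff (Finsupp.single 1 1) (L i) with hb
  have hdet : ∀ i j, i ≠ j → a i * b j - a j * b i ≠ 0 := fun i j hij =>
    det_ne_zero (hL i) (hL j) (hind i j hij)
  set M : Fin r → MvPolynomial (Fin 2) k := fun i => ∏ j ∈ Finset.univ.erase i, L j with hM
  have heval : ∀ i j, eval ![-(b i), a i] (L j) = a j * (-(b i)) + b j * (a i) := fun i j => by
    simpa using eval_lin (hL j) ![-(b i), a i]
  have hMindep : LinearIndependent k M := by
    rw [Fintype.linearIndependent_iff]
    intro g hg i
    have h1 := congrArg (eval ![-(b i), a i]) hg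
    rw [map_sum, map_zero] at h1
    simp only [smul_eq_C_mul, map_mul, eval_C] at h1
    rw [Finset.sum_eq_single i ?_ ?_] at h1
    · have hprod : eval ![-(b i), a i] (M i) ≠ 0 := by
        rw [hM]
        simp only
        rw [map_prod]
        apply Finset.prod_ne_zero_iff.mpr
        intro j hj
        rw [heval i j]
        intro h0
        exact hdet i j (Finset.ne_of_mem_erase hj).symm (by linear_combination h0)
      exact (mul_eq_zero.mp h1).resolve_right hprod
    · intro j _ hji
      have hz : eval ![-(b i), a i] (L i) = 0 := by rw [heval]; ring
      rw [hM]
      simp only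
      rw [map_prod, Finset.prod_eq_zero (Finset.mem_erase.mpr ⟨hji.symm, Finset.mem_univ i⟩) hz,
        mul_zero]
    · intro h; exact absurd (Finset.mem_univ i) h
  set m : Fin r → MvPolynomial (Fin 2) k := fun i => X 0 ^ (i : ℕ) * X 1 ^ (n - i) with hm
  set W := Submodule.span k (Set.range m) with hW
  have hmonW : ∀ (d : Fin 2 →₀ ℕ), d.degree = n → ∀ c : k,
      (monomial d c : MvPolynomial (Fin 2) k) ∈ W := by
    intro d hd c
    have hd0 : d 0 + d 1 = n := by rw [degree_fin2] at hd; omega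
    have hfin : (d 0) < r := by omega
    have hmm : m ⟨d 0, hfin⟩ = X 0 ^ (d 0) * X 1 ^ (n - d 0) := by simp only [hm]
    have hsum : d = Finsupp.single 0 (d 0) + Finsupp.single 1 (n - d 0) := by
      ext i
      fin_cases i
      · simp
      · simp [Finsupp.single_apply]
        omega
    have hdm : (monomial d (1:k)) = X 0 ^ (d 0) * X 1 ^ (n - d 0) := by
      rw [X_pow_eq_monomial, X_pow_eq_monomial, monomial_mul, one_mul, ← hsum]
    have hsm : (monomial d c : MvPolynomial (Fin 2) k) = c • m ⟨d 0, hfin⟩ := by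
      rw [hmm, ← hdm, smul_monomial, smul_eq_mul, mul_one]
    rw [hsm]
    exact Submodule.smul_mem _ _ (Submodule.subset_span ⟨_, rfl⟩)
  have hMW : ∀ i, M i ∈ W := by
    intro i
    have hhom : (M i).IsHomogeneous n := by
      have := MvPolynomial.IsHomogeneous.prod (Finset.univ.erase i) L (fun _ => 1)
        (fun j _ => hL j)
      simpa [Finset.card_erase_of_mem (Finset.mem_univ i)] using this
    rw [← support_sum_monomial_coeff (M i)]
    apply Submodule.sum_mem
    intro d hd
    refine hmonW d ?_ _
    by_contra h
    exact (mem_support_iff.mp hd) (hhom.coeff_eq_zero h)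
  have hfd : FiniteDimensional k W := FiniteDimensional.span_of_finite k (Set.finite_range m)
  have h1 : Submodule.span k (Set.range M) ≤ W :=
    Submodule.span_le.mpr (Set.range_subset_iff.mpr hMW)
  have h2 : Module.finrank k W ≤ r := by
    refine le_trans (finrank_span_le_card _) ?_
    rw [Set.toFinset_range]
    exact le_trans (Finset.card_image_le) (by simp)
  have h3 : Module.finrank k (Submodule.span k (Set.range M)) = r := by
    rw [finrank_span_eq_card hMindep]; simp
  have hspan : Submodule.span k (Set.range M) = W :=
    Submodule.eq_of_le_of_finrank_le h1 (by rw [h3]; exact h2)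
  apply le_antisymm
  · rw [Ideal.span_le]
    rintro x ⟨i, rfl⟩
    have hLI : ∀ j, L j ∈ I := fun j => by
      rw [lin_form (hL j)]
      exact Ideal.add_mem _ (Ideal.mul_mem_left _ _ (Ideal.subset_span (by simp)))
        (Ideal.mul_mem_left _ _ (Ideal.subset_span (by simp)))
    have := Ideal.prod_mem_prod (s := Finset.univ.erase i)
      (I := fun _ : Fin r => I) (x := L) (fun j _ => hLI j)
    simpa [Finset.prod_const, Finset.card_erase_of_mem (Finset.mem_univ i)] using this
  · rw [hI, ← Ideal.submodule_span_eq, Submodule.span_pow, Ideal.submodule_span_eq, Ideal.span_le]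
    intro x hx
    obtain ⟨c, hc, rfl⟩ := setpow n x hx
    have hfin : c < r := by omega
    have hxm : (X 0 : MvPolynomial (Fin 2) k) ^ c * X 1 ^ (n - c) = m ⟨c, hfin⟩ := rfl
    rw [hxm]
    have hmem : m ⟨c, hfin⟩ ∈ Submodule.span k (Set.range M) :=
      hspan ▸ Submodule.subset_span ⟨_, rfl⟩
    exact Submodule.span_le_restrictScalars k _ _ hmem
end

section
/- Let k be a field, R = k[x_1,x_2], and let d_1,…,d_r be positive integers with r ≥ 2 and d_1+⋯+d_r = d. If L_1,…,L_r ∈ R_1 are pairwise linearly independent linear forms, F = L_1^{d_1}⋯L_r^{d_r}, and I_P = (F/L_1,…,F/L_r), then the degree-d graded component of I_P equals the degree-d graded component of the principal ideal (L_1^{d_1−1}⋯L_r^{d_r−1}). -/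
open MvPolynomial Finset

namespace Stmt2Aux

variable {k : Type*} [Field k]

lemma deg2 (m : Fin 2 →₀ ℕ) : m.degree = m 0 + m 1 := by
  rw [Finsupp.degree, ← Fin.sum_univ_two (f := fun i => m i)]
  exact Finset.sum_subset (Finset.subset_univ _) (fun i _ h => Finsupp.notMem_support_iff.mp h)

lemma eq_single (m : Fin 2 →₀ ℕ) (h : m.degree = 1) :
    m = Finsupp.single 0 1 ∨ m = Finsupp.single 1 1 := by
  rw [deg2] at h
  have hc : m 0 = 0 ∨ m 0 = 1 := by omega
  rcases hc with h0 | h0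
  · right
    have h1 : m 1 = 1 := by omega
    ext i; fin_cases i <;> simp [h0, h1, Finsupp.single_apply]
  · left
    have h1 : m 1 = 0 := by omega
    ext i; fin_cases i <;> simp [h0, h1, Finsupp.single_apply]

lemma rep {L : MvPolynomial (Fin 2) k} (hL : L.IsHomogeneous 1) :
    L = C (coeff (Finsupp.single 0 1) L) * X 0 + C (coeff (Finsupp.single 1 1) L) * X 1 := by
  apply MvPolynomial.ext
  intro m
  rw [coeff_add, coeff_C_mul, coeff_C_mul, coeff_X', coeff_X']
  by_cases h0 : Finsupp.single (0 : Fin 2) 1 = m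
  · subst h0
    have : ¬ (Finsupp.single (1 : Fin 2) 1 = Finsupp.single (0 : Fin 2) 1) := by
      simp [Finsupp.single_eq_single_iff]
    simp [this]
  · by_cases h1 : Finsupp.single (1 : Fin 2) 1 = m
    · subst h1
      simp [h0]
    · have hdeg : m.degree ≠ 1 := fun h => by
        rcases eq_single m h with h | h <;> [exact h0 h.symm; exact h1 h.symm]
      rw [hL.coeff_eq_zero hdeg]
      simp [h0, h1]

lemma eval_lin {L : MvPolynomial (Fin 2) k} (hL : L.IsHomogeneous 1) (w : Fin 2 → k) :
    eval w L = coeff (Finsupp.single 0 1) L * w 0 + coeff (Finsupp.single 1 1) L * w 1 := by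
  conv_lhs => rw [rep hL]
  simp

lemma det_ne {L1 L2 : MvPolynomial (Fin 2) k} (h1 : L1.IsHomogeneous 1)
    (h2 : L2.IsHomogeneous 1) (hind : LinearIndependent k ![L1, L2]) :
    coeff (Finsupp.single 0 1) L2 * coeff (Finsupp.single 1 1) L1
      - coeff (Finsupp.single 1 1) L2 * coeff (Finsupp.single 0 1) L1 ≠ 0 := by
  set a1 := coeff (Finsupp.single 0 1) L1 with ha1
  set b1 := coeff (Finsupp.single 1 1) L1 with hb1
  set a2 := coeff (Finsupp.single 0 1) L2 with ha2
  set b2 := coeff (Finsupp.single 1 1) L2 with hb2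
  intro hdet
  rw [LinearIndependent.pair_iff] at hind
  have comb : ∀ s t : k, s • L1 + t • L2
      = C (s*a1+t*a2) * X 0 + C (s*b1+t*b2) * X 1 := by
    intro s t
    rw [smul_eq_C_mul, smul_eq_C_mul]
    conv_lhs => rw [rep h1, rep h2]
    simp only [map_add, map_mul]
    ring
  have key : ∀ s t : k, s * a1 + t * a2 = 0 → s * b1 + t * b2 = 0 → s = 0 ∧ t = 0 := by
    intro s t e1 e2
    exact hind s t (by rw [comb, e1, e2]; simp)
  by_cases ha : a1 = 0
  · by_cases hb : b1 = 0
    · have := (key 1 0 (by simp [ha]) (by simp [hb])).1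
      exact one_ne_zero this
    · have := (key b2 (-b1) (by linear_combination -hdet) (by ring)).2
      exact hb (neg_eq_zero.mp this)
  · have := (key a2 (-a1) (by ring) (by linear_combination hdet)).2
    exact ha (neg_eq_zero.mp this)

noncomputable def fd (n : ℕ) (i : Fin (n+1)) : Fin 2 →₀ ℕ :=
  Finsupp.single 0 (i : ℕ) + Finsupp.single 1 (n - i)

lemma fd_apply0 (n : ℕ) (i : Fin (n+1)) : fd n i 0 = i := by
  simp [fd, Finsupp.single_apply]

lemma fd_apply1 (n : ℕ) (i : Fin (n+1)) : fd n i 1 = n - i := by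
  simp [fd, Finsupp.single_apply]

lemma fd_degree (n : ℕ) (i : Fin (n+1)) : (fd n i).degree = n := by
  rw [deg2, fd_apply0, fd_apply1]
  omega

lemma fd_inj (n : ℕ) {i j : Fin (n+1)} (h : fd n i = fd n j) : i = j := by
  have := congrArg (fun f => f 0) h
  simp only [fd_apply0] at this
  exact Fin.ext this

lemma fd_eq_of_degree {n : ℕ} {m : Fin 2 →₀ ℕ} (hm : m.degree = n) :
    fd n ⟨m 0, by rw [deg2] at hm; omega⟩ = m := by
  rw [deg2] at hm
  have h0 : fd n ⟨m 0, by omega⟩ 0 = m 0 := fd_apply0 n _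
  have h1 : fd n ⟨m 0, by omega⟩ 1 = m 1 := by rw [fd_apply1]; simp; omega
  ext j
  fin_cases j
  · exact h0
  · exact h1

variable (k) in
noncomputable def toCoeffs (n : ℕ) :
    (homogeneousSubmodule (Fin 2) k n) →ₗ[k] (Fin (n+1) → k) where
  toFun p i := coeff (fd n i) (p : MvPolynomial (Fin 2) k)
  map_add' p q := by ext i; simp
  map_smul' c p := by ext i; simp

variable (k) in
noncomputable def ofCoeffs (n : ℕ) :
    (Fin (n+1) → k) →ₗ[k] (homogeneousSubmodule (Fin 2) k n) where
  toFun v := ⟨∑ i, monomial (fd n i) (v i), Submodule.sum_mem _ fun i _ =>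
      (mem_homogeneousSubmodule _ _).2 (isHomogeneous_monomial _ (fd_degree n i))⟩
  map_add' u v := by
    apply Subtype.ext
    simp [Finset.sum_add_distrib]
  map_smul' c v := by
    apply Subtype.ext
    simp [Finset.smul_sum, smul_monomial]

variable (k) in
noncomputable def homEquiv (n : ℕ) :
    (homogeneousSubmodule (Fin 2) k n) ≃ₗ[k] (Fin (n+1) → k) := by
  refine LinearEquiv.ofLinear (toCoeffs k n) (ofCoeffs k n) ?_ ?_
  · apply LinearMap.ext
    intro v
    ext i
    simp only [LinearMap.comp_apply, LinearMap.id_apply, toCoeffs, ofCoeffs,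
      LinearMap.coe_mk, AddHom.coe_mk]
    rw [coeff_sum]
    rw [Finset.sum_eq_single i]
    · simp [coeff_monomial]
    · intro j _ hji
      rw [coeff_monomial, if_neg (fun h => hji (fd_inj n h))]
    · simp
  · apply LinearMap.ext
    intro p
    apply Subtype.ext
    simp only [LinearMap.comp_apply, LinearMap.id_apply, toCoeffs, ofCoeffs,
      LinearMap.coe_mk, AddHom.coe_mk]
    have hp : (p : MvPolynomial (Fin 2) k).IsHomogeneous n :=
      (mem_homogeneousSubmodule _ _).1 p.2
    apply MvPolynomial.ext
    intro m
    rw [coeff_sum]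
    by_cases hm : m.degree = n
    · set i : Fin (n+1) := ⟨m 0, by rw [deg2] at hm; omega⟩ with hi
      have hfd : fd n i = m := fd_eq_of_degree hm
      rw [Finset.sum_eq_single i]
      · rw [coeff_monomial, if_pos hfd, hfd]
      · intro j _ hji
        rw [coeff_monomial, if_neg]
        intro h
        exact hji (fd_inj n (h.trans hfd.symm))
      · simp
    · rw [hp.coeff_eq_zero hm]
      apply Finset.sum_eq_zero
      intro j _
      rw [coeff_monomial, if_neg]
      intro h
      exact hm (h ▸ fd_degree n j)

lemma finrank_hom (n : ℕ) :
    Module.finrank k (homogeneousSubmodule (Fin 2) k n) = n + 1 := by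
  rw [LinearEquiv.finrank_eq (homEquiv k n), Module.finrank_fin_fun]

lemma span_M {r : ℕ} (hr : 2 ≤ r) (L : Fin r → MvPolynomial (Fin 2) k)
    (hL : ∀ i, (L i).IsHomogeneous 1)
    (hind : ∀ i j, i ≠ j → LinearIndependent k ![L i, L j])
    (g : MvPolynomial (Fin 2) k) (hg : g.IsHomogeneous (r - 1)) :
    g ∈ Submodule.span k (Set.range fun i => ∏ j ∈ univ.erase i, L j) := by
  set M : Fin r → MvPolynomial (Fin 2) k := fun i => ∏ j ∈ univ.erase i, L j with hM
  have hMhom : ∀ i, (M i).IsHomogeneous (r - 1) := by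
    intro i
    have := MvPolynomial.IsHomogeneous.prod (univ.erase i) L (fun _ => 1)
      (fun j _ => hL j)
    simpa [Finset.card_erase_of_mem (mem_univ i)] using this
  have hMind : LinearIndependent k M := by
    rw [Fintype.linearIndependent_iff]
    intro c hc i
    set w : Fin 2 → k :=
      ![coeff (Finsupp.single 1 1) (L i), - coeff (Finsupp.single 0 1) (L i)] with hw
    have hw0 : w 0 = coeff (Finsupp.single 1 1) (L i) := rfl
    have hw1 : w 1 = - coeff (Finsupp.single 0 1) (L i) := rfl
    have hevals : ∀ j, j ≠ i → eval w (L j) ≠ 0 := by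
      intro j hj
      rw [eval_lin (hL j), hw0, hw1]
      have := det_ne (hL i) (hL j) (hind i j (Ne.symm hj))
      intro hzero
      apply this
      linear_combination hzero
    have hLi0 : eval w (L i) = 0 := by
      rw [eval_lin (hL i), hw0, hw1]; ring
    have heval := congrArg (eval w) hc
    simp only [map_sum, smul_eq_C_mul, map_mul, eval_C, map_zero] at heval
    rw [Finset.sum_eq_single i] at heval
    · have hprod : eval w (M i) ≠ 0 := by
        rw [hM]
        simp only [map_prod]
        rw [Finset.prod_ne_zero_iff]
        intro j hj
        exact hevals j (Finset.ne_of_mem_erase hj)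
      exact (mul_eq_zero.1 heval).resolve_right hprod
    · intro j _ hji
      have : eval w (M j) = 0 := by
        rw [hM]
        simp only [map_prod]
        exact Finset.prod_eq_zero (Finset.mem_erase.2 ⟨Ne.symm hji, mem_univ i⟩) hLi0
      rw [this, mul_zero]
    · simp
  set M' : Fin r → homogeneousSubmodule (Fin 2) k (r-1) :=
    fun i => ⟨M i, (mem_homogeneousSubmodule _ _).2 (hMhom i)⟩ with hM'
  have hM'ind : LinearIndependent k M' := by
    apply LinearIndependent.of_comp (homogeneousSubmodule (Fin 2) k (r-1)).subtype
    exact hMind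
  have : Nonempty (Fin r) := ⟨⟨0, by omega⟩⟩
  have htop : Submodule.span k (Set.range M') = ⊤ := by
    apply hM'ind.span_eq_top_of_card_eq_finrank
    rw [finrank_hom, Fintype.card_fin]
    omega
  have hmem : (⟨g, (mem_homogeneousSubmodule _ _).2 hg⟩ :
      homogeneousSubmodule (Fin 2) k (r-1)) ∈ Submodule.span k (Set.range M') := by
    rw [htop]; trivial
  have := Submodule.mem_map_of_mem
    (f := (homogeneousSubmodule (Fin 2) k (r-1)).subtype) hmem
  rw [Submodule.map_span, ← Set.range_comp] at this
  exact this

lemma mem_ideal {r : ℕ} (hr : 2 ≤ r) (L : Fin r → MvPolynomial (Fin 2) k)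
    (hL : ∀ i, (L i).IsHomogeneous 1)
    (hind : ∀ i j, i ≠ j → LinearIndependent k ![L i, L j])
    (g : MvPolynomial (Fin 2) k) (hg : g.IsHomogeneous r) :
    g ∈ Ideal.span (Set.range fun i => ∏ j ∈ univ.erase i, L j) := by
  set M : Fin r → MvPolynomial (Fin 2) k := fun i => ∏ j ∈ univ.erase i, L j with hM
  have hsub : Submodule.span k (Set.range M) ≤
      (Ideal.span (Set.range M)).restrictScalars k :=
    le_trans (Submodule.span_le_restrictScalars k _ _) le_rfl
  rw [← g.support_sum_monomial_coeff]
  apply Submodule.sum_mem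
  intro m hm
  have hdeg : m.degree = r := by
    by_contra h
    exact (mem_support_iff.1 hm) (hg.coeff_eq_zero h)
  rw [deg2] at hdeg
  have hmon : monomial m (coeff m g) = C (coeff m g) * (X 0 ^ m 0 * X 1 ^ m 1) := by
    rw [monomial_eq]
    congr 1
    rw [Finsupp.prod_fintype _ _ (fun i => pow_zero _), Fin.prod_univ_two]
  rcases Nat.eq_zero_or_pos (m 0) with h0' | h0
  rotate_left
  · obtain ⟨a, ha⟩ : ∃ a, m 0 = a + 1 := ⟨m 0 - 1, by omega⟩
    have thom : (X (0:Fin 2) ^ a * X 1 ^ m 1 : MvPolynomial (Fin 2) k).IsHomogeneous (r-1) := by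
      have := (isHomogeneous_X_pow (R := k) (0:Fin 2) a).mul (isHomogeneous_X_pow (1:Fin 2) (m 1))
      convert this using 1
      omega
    have ht : (X (0:Fin 2) ^ a * X 1 ^ m 1 : MvPolynomial (Fin 2) k) ∈
        Ideal.span (Set.range M) :=
      hsub (span_M hr L hL hind _ thom)
    have : monomial m (coeff m g)
        = (C (coeff m g) * X 0) * (X (0:Fin 2) ^ a * X 1 ^ m 1) := by
      rw [hmon, ha, pow_succ]; ring
    rw [this]
    exact Ideal.mul_mem_left _ _ ht
  · have h1 : 0 < m 1 := by omega
    obtain ⟨a, ha⟩ : ∃ a, m 1 = a + 1 := ⟨m 1 - 1, by omega⟩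
    have thom : (X (0:Fin 2) ^ m 0 * X 1 ^ a : MvPolynomial (Fin 2) k).IsHomogeneous (r-1) := by
      have := (isHomogeneous_X_pow (R := k) (0:Fin 2) (m 0)).mul (isHomogeneous_X_pow (1:Fin 2) a)
      convert this using 1
      omega
    have ht : (X (0:Fin 2) ^ m 0 * X 1 ^ a : MvPolynomial (Fin 2) k) ∈
        Ideal.span (Set.range M) :=
      hsub (span_M hr L hL hind _ thom)
    have : monomial m (coeff m g)
        = (C (coeff m g) * X 1) * (X (0:Fin 2) ^ m 0 * X 1 ^ a) := by
      rw [hmon, ha, pow_succ]; ring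
    rw [this]
    exact Ideal.mul_mem_left _ _ ht

end Stmt2Aux

open Stmt2Aux in
/-- In `k[x₁,x₂]`, for pairwise linearly independent linear forms `L 1, …, L r` (`r ≥ 2`),
with `F = ∏ (L i)^(d i)` of degree `d`, the degree-`d` graded component of the ideal
`I_P = (F/L 1, …, F/L r)` equals the degree-`d` component of the principal ideal
`(∏ (L i)^(d i - 1))`. -/
theorem stmt2 {k : Type*} [Field k] {r d : ℕ} (hr : 2 ≤ r)
    (dd : Fin r → ℕ) (hdd : ∀ i, 0 < dd i) (hsum : ∑ i, dd i = d)
    (L : Fin r → MvPolynomial (Fin 2) k) (hL : ∀ i, (L i).IsHomogeneous 1)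
    (hind : ∀ i j, i ≠ j → LinearIndependent k ![L i, L j]) :
    Submodule.restrictScalars k
        (Ideal.span (Set.range fun i : Fin r =>
          L i ^ (dd i - 1) * ∏ j ∈ Finset.univ.erase i, L j ^ dd j))
      ⊓ homogeneousSubmodule (Fin 2) k d
    = Submodule.restrictScalars k (Ideal.span {∏ j, L j ^ (dd j - 1)})
      ⊓ homogeneousSubmodule (Fin 2) k d := by
  set Φ : MvPolynomial (Fin 2) k := ∏ j, L j ^ (dd j - 1) with hΦdef
  set M : Fin r → MvPolynomial (Fin 2) k := fun i => ∏ j ∈ univ.erase i, L j with hMdef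
  set e : ℕ := ∑ j, (dd j - 1) with hedef
  have he : e + r = d := by
    have h1 : ∀ j : Fin r, (dd j - 1) + 1 = dd j := fun j => Nat.succ_pred_eq_of_pos (hdd j)
    calc e + r = ∑ j : Fin r, ((dd j - 1) + 1) := by
          rw [Finset.sum_add_distrib]; simp; exact hedef
      _ = d := by rw [← hsum]; exact Finset.sum_congr rfl fun j _ => h1 j
  have hΦhom : Φ.IsHomogeneous e := by
    have := MvPolynomial.IsHomogeneous.prod univ (fun j => L j ^ (dd j - 1))
      (fun j => 1 * (dd j - 1)) (fun j _ => (hL j).pow (dd j - 1))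
    simpa using this
  have hG : ∀ i, L i ^ (dd i - 1) * ∏ j ∈ Finset.univ.erase i, L j ^ dd j = Φ * M i := by
    intro i
    have hΦi : Φ = L i ^ (dd i - 1) * ∏ j ∈ univ.erase i, L j ^ (dd j - 1) :=
      (Finset.mul_prod_erase univ _ (mem_univ i)).symm
    rw [hΦi, mul_assoc, ← Finset.prod_mul_distrib]
    congr 1
    apply Finset.prod_congr rfl
    intro j hj
    rw [← pow_succ, Nat.sub_add_cancel (hdd j)]
  apply le_antisymm
  · rintro p hp
    rw [Submodule.mem_inf] at hp ⊢
    refine ⟨?_, hp.2⟩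
    have hle : Ideal.span (Set.range fun i : Fin r =>
        L i ^ (dd i - 1) * ∏ j ∈ Finset.univ.erase i, L j ^ dd j) ≤ Ideal.span {Φ} := by
      rw [Ideal.span_le]
      rintro _ ⟨i, rfl⟩
      exact Ideal.mem_span_singleton.2 ⟨M i, hG i⟩
    exact hle hp.1
  · rintro p hp
    rw [Submodule.mem_inf] at hp ⊢
    obtain ⟨hp1, hp2⟩ := hp
    refine ⟨?_, hp2⟩
    obtain ⟨h, hph⟩ := Ideal.mem_span_singleton.1 hp1
    set g : MvPolynomial (Fin 2) k := homogeneousComponent r h with hgdef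
    have key : homogeneousComponent d (Φ * h) = Φ * g := by
      conv_lhs => rw [← h.sum_homogeneousComponent]
      rw [Finset.mul_sum, map_sum]
      have term : ∀ m, homogeneousComponent d (Φ * homogeneousComponent m h)
          = if m = r then Φ * g else 0 := by
        intro m
        have hhom : (Φ * homogeneousComponent m h).IsHomogeneous (e + m) :=
          hΦhom.mul (homogeneousComponent_isHomogeneous m h)
        rw [homogeneousComponent_of_mem ((mem_homogeneousSubmodule _ _).2 hhom)]
        by_cases hmr : m = r
        · subst hmr; rw [if_pos he.symm, if_pos rfl]
        · rw [if_neg (by omega), if_neg hmr]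
      rw [Finset.sum_congr rfl fun m _ => term m, Finset.sum_ite_eq' _ r]
      by_cases hrN : r ∈ Finset.range (h.totalDegree + 1)
      · rw [if_pos hrN]
      · have hlt : h.totalDegree < r := by simpa using hrN
        rw [if_neg hrN, hgdef, homogeneousComponent_eq_zero r h hlt, mul_zero]
    have hpg : p = Φ * g := by
      have h1 : homogeneousComponent d p = p := by
        rw [homogeneousComponent_of_mem hp2, if_pos rfl]
      rw [← h1, hph, key]
    have hge : g.IsHomogeneous r := homogeneousComponent_isHomogeneous r h
    have hgI : g ∈ Ideal.span (Set.range M) := mem_ideal hr L hL hind g hge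
    have main : ∀ q ∈ Ideal.span (Set.range M),
        Φ * q ∈ Ideal.span (Set.range fun i : Fin r =>
          L i ^ (dd i - 1) * ∏ j ∈ Finset.univ.erase i, L j ^ dd j) := by
      intro q hq
      refine Submodule.span_induction ?_ ?_ ?_ ?_ hq
      · rintro _ ⟨i, rfl⟩
        exact Ideal.subset_span ⟨i, hG i⟩
      · simp
      · intro x y _ _ hx hy
        rw [mul_add]
        exact Ideal.add_mem _ hx hy
      · intro c x _ hx
        rw [smul_eq_mul, mul_left_comm]
        exact Ideal.mul_mem_left _ _ hx
    have := main g hgI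
    rw [Submodule.restrictScalars_mem, hpg]
    exact this
end

section
/- Let k be an algebraically closed field and R = k[x_1,…,x_n] with n ≥ 3 and r ≥ 2. For a general choice of linear forms L_1,…,L_r ∈ R_1, the intersection of the ideals (L_i, L_j) over all pairs 1 ≤ i < j ≤ r, i.e. ⋂_{1≤i<j≤r}(L_i,L_j), equals the ideal (L_2L_3⋯L_r, L_1L_3⋯L_r, …, L_1L_2⋯L_{r−1}) generated by the r products of all but one of the L_i. -/
open MvPolynomial Finset

noncomputable def lin {k : Type*} [CommSemiring k] {n : ℕ} (c : Fin n → k) :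
    MvPolynomial (Fin n) k :=
  ∑ i, C (c i) * X i

section Lin

variable {k : Type*} [CommRing k] {n : ℕ}

/-- The substitution homomorphism sending `X i` to the linear form with coefficients `A i`. -/
noncomputable def T (A : Matrix (Fin n) (Fin n) k) :
    MvPolynomial (Fin n) k →ₐ[k] MvPolynomial (Fin n) k :=
  aeval (fun i => lin (A i))

lemma T_X (A : Matrix (Fin n) (Fin n) k) (i : Fin n) : T A (X i) = lin (A i) :=
  aeval_X _ _

lemma T_lin (A : Matrix (Fin n) (Fin n) k) (c : Fin n → k) :
    T A (lin c) = lin (Matrix.vecMul c A) := by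
  rw [lin, map_sum]
  have h1 : ∀ i, T A (C (c i) * X i) = C (c i) * lin (A i) := by
    intro i
    rw [map_mul, T_X]
    congr 1
    exact algHom_C _ _
  simp_rw [h1, lin, Finset.mul_sum]
  rw [Finset.sum_comm]
  congr 1
  funext j
  simp_rw [← mul_assoc, ← map_mul]
  rw [← Finset.sum_mul, ← map_sum]
  congr 2

lemma T_comp (A B : Matrix (Fin n) (Fin n) k) : (T A).comp (T B) = T (B * A) := by
  apply MvPolynomial.algHom_ext
  intro i
  simp only [AlgHom.comp_apply, T_X, T_lin]
  congr 1

lemma T_one : T (1 : Matrix (Fin n) (Fin n) k) = AlgHom.id k _ := by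
  apply MvPolynomial.algHom_ext
  intro i
  rw [T_X]
  simp only [AlgHom.id_apply]
  rw [lin]
  rw [Finset.sum_eq_single i]
  · simp [Matrix.one_apply]
  · intro j _ hj
    simp [Matrix.one_apply, hj.symm]
  · simp

end Lin

section KerX

variable {k : Type*} [CommRing k] {n : ℕ}

variable (k n) in
/-- Substitution killing the variables in `z`. -/
noncomputable def KH (z : Fin n → Prop) [DecidablePred z] :
    MvPolynomial (Fin n) k →ₐ[k] MvPolynomial (Fin n) k :=
  aeval (fun t => if z t then 0 else X t)

lemma sub_KH_mem (z : Fin n → Prop) [DecidablePred z] (f : MvPolynomial (Fin n) k) :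
    f - KH k n z f ∈ Ideal.span (X '' {t | z t} : Set (MvPolynomial (Fin n) k)) := by
  induction f using MvPolynomial.induction_on with
  | C a => simp [KH]
  | add p q hp hq =>
    have : p + q - KH k n z (p + q) = (p - KH k n z p) + (q - KH k n z q) := by
      rw [map_add]; ring
    rw [this]
    exact add_mem hp hq
  | mul_X p i hp =>
    rw [map_mul]
    have hXi : KH k n z (X i) = if z i then 0 else X i := aeval_X _ _
    by_cases hi : z i
    · rw [hXi, if_pos hi, mul_zero, sub_zero]
      exact Ideal.mul_mem_left _ p (Ideal.subset_span ⟨i, hi, rfl⟩)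
    · rw [hXi, if_neg hi, ← sub_mul]
      exact Ideal.mul_mem_right _ _ hp

lemma span_X_eq_ker (z : Fin n → Prop) [DecidablePred z] :
    Ideal.span (X '' {t | z t} : Set (MvPolynomial (Fin n) k)) =
      RingHom.ker (KH k n z).toRingHom := by
  refine le_antisymm (Ideal.span_le.mpr ?_) ?_
  · rintro x ⟨t, ht, rfl⟩
    rw [SetLike.mem_coe, RingHom.mem_ker, AlgHom.toRingHom_eq_coe, RingHom.coe_coe]
    rw [show KH k n z (X t) = if z t then 0 else X t from aeval_X _ _]
    exact if_pos ht
  · intro f hf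
    rw [RingHom.mem_ker, AlgHom.toRingHom_eq_coe, RingHom.coe_coe] at hf
    have := sub_KH_mem z f
    rwa [hf, sub_zero] at this

lemma isPrime_span_X [IsDomain k] (z : Fin n → Prop) [DecidablePred z] :
    (Ideal.span (X '' {t | z t} : Set (MvPolynomial (Fin n) k))).IsPrime := by
  rw [span_X_eq_ker]
  exact RingHom.ker_isPrime _

lemma isPrime_span_X_pair [IsDomain k] (a b : Fin n) :
    (Ideal.span ({X a, X b} : Set (MvPolynomial (Fin n) k))).IsPrime := by
  have h := isPrime_span_X (k := k) (z := fun t : Fin n => t = a ∨ t = b)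
  have he : (X '' {t : Fin n | t = a ∨ t = b} : Set (MvPolynomial (Fin n) k)) = {X a, X b} := by
    have : {t : Fin n | t = a ∨ t = b} = {a, b} := by ext t; simp [Set.mem_insert_iff]
    rw [this, Set.image_pair]
  rwa [he] at h

lemma isPrime_span_X_single [IsDomain k] (a : Fin n) :
    (Ideal.span ({X a} : Set (MvPolynomial (Fin n) k))).IsPrime := by
  have h := isPrime_span_X (k := k) (z := fun t : Fin n => t = a)
  have he : (X '' {t : Fin n | t = a} : Set (MvPolynomial (Fin n) k)) = {X a} := by
    have : {t : Fin n | t = a} = {a} := by ext t; simp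
    rw [this, Set.image_singleton]
  rwa [he] at h

lemma X_not_mem_span_pair [Nontrivial k] {a b c : Fin n} (h1 : c ≠ a) (h2 : c ≠ b) :
    (X c : MvPolynomial (Fin n) k) ∉ Ideal.span ({X a, X b} : Set (MvPolynomial (Fin n) k)) := by
  intro h
  obtain ⟨u, v, huv⟩ := Ideal.mem_span_pair.mp h
  have := congrArg (eval (fun t : Fin n => if t = c then (1 : k) else 0)) huv
  simp [eval_X, Ne.symm h1, Ne.symm h2] at this

lemma X_not_mem_span_single [Nontrivial k] {a b : Fin n} (h1 : b ≠ a) :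
    (X b : MvPolynomial (Fin n) k) ∉ Ideal.span ({X a} : Set (MvPolynomial (Fin n) k)) := by
  intro h
  obtain ⟨u, hu⟩ := Ideal.mem_span_singleton'.mp h
  have := congrArg (eval (fun t : Fin n => if t = b then (1 : k) else 0)) hu
  simp [eval_X, Ne.symm h1] at this

end KerX

section Triple

lemma triple_facts {k : Type*} [Field k] {n : ℕ} (hn : 3 ≤ n) (u v w : Fin n → k)
    (hdet : (Matrix.of fun p q : Fin 3 =>
      ![u, v, w] p ⟨(q : ℕ), by omega⟩).det ≠ 0) :
    Prime (lin u) ∧ (Ideal.span {lin u, lin v}).IsPrime ∧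
      (lin w ∉ Ideal.span {lin u, lin v}) ∧ (lin v ∉ Ideal.span {lin u}) := by
  set ρ : Fin 3 → Fin n → k := ![u, v, w] with hρ
  set e : Fin 3 ⊕ Fin (n - 3) ≃ Fin n := finSumFinEquiv.trans (finCongr (by omega)) with he
  have hie : ∀ q : Fin 3, e (Sum.inl q) = (⟨(q : ℕ), by omega⟩ : Fin n) := by
    intro q
    apply Fin.ext
    simp [he]
  set M : Matrix (Fin 3 ⊕ Fin (n - 3)) (Fin 3 ⊕ Fin (n - 3)) k :=
    Matrix.fromBlocks (Matrix.of fun p q => ρ p (e (Sum.inl q)))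
      (Matrix.of fun p q => ρ p (e (Sum.inr q))) 0 1 with hM
  set A : Matrix (Fin n) (Fin n) k := Matrix.reindex e e M with hA
  have hrow : ∀ p : Fin 3, A (e (Sum.inl p)) = ρ p := by
    intro p
    funext b
    have h1 : A (e (Sum.inl p)) b = M (Sum.inl p) (e.symm b) := by
      rw [hA, Matrix.reindex_apply, Matrix.submatrix_apply, Equiv.symm_apply_apply]
    rcases hb : e.symm b with q | q
    · rw [h1, hb, hM]
      have : b = e (Sum.inl q) := by rw [← hb, Equiv.apply_symm_apply]
      rw [this]
      rfl
    · rw [h1, hb, hM]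
      have : b = e (Sum.inr q) := by rw [← hb, Equiv.apply_symm_apply]
      rw [this]
      rfl
  have hdetA : IsUnit A.det := by
    rw [hA, Matrix.det_reindex_self, hM, Matrix.det_fromBlocks_zero₂₁, Matrix.det_one, mul_one]
    rw [isUnit_iff_ne_zero]
    intro h0
    apply hdet
    rw [← h0]
    congr 1
  have hBA : A⁻¹ * A = 1 := Matrix.nonsing_inv_mul A hdetA
  have hAB : A * A⁻¹ = 1 := Matrix.mul_nonsing_inv A hdetA
  have hc2 : ∀ f, T A⁻¹ (T A f) = f := by
    intro f
    have h := T_comp (A := A⁻¹) (B := A)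
    rw [hAB, T_one] at h
    have := congrArg (fun g : MvPolynomial (Fin n) k →ₐ[k] MvPolynomial (Fin n) k => g f) h
    simpa using this
  set xa := e (Sum.inl 0) with hxa
  set xb := e (Sum.inl 1) with hxb
  set xc := e (Sum.inl 2) with hxc
  have hinj : ∀ p q : Fin 3, e (Sum.inl p) = e (Sum.inl q) → p = q := by
    intro p q hpq
    have := e.injective hpq
    exact Sum.inl.inj this
  have hab : xa ≠ xb := fun h => by simpa using hinj 0 1 h
  have hca : xc ≠ xa := fun h => by simpa using hinj 2 0 h
  have hcb : xc ≠ xb := fun h => by simpa using hinj 2 1 h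
  have hba : xb ≠ xa := fun h => by simpa using hinj 1 0 h
  have hψa : T A (X xa) = lin u := by rw [T_X, hxa, hrow 0]; rfl
  have hψb : T A (X xb) = lin v := by rw [T_X, hxb, hrow 1]; rfl
  have hψc : T A (X xc) = lin w := by rw [T_X, hxc, hrow 2]; rfl
  have hφa : T A⁻¹ (lin u) = X xa := by rw [← hψa, hc2]
  have hφb : T A⁻¹ (lin v) = X xb := by rw [← hψb, hc2]
  have hφc : T A⁻¹ (lin w) = X xc := by rw [← hψc, hc2]
  have hc1 : ∀ f, T A (T A⁻¹ f) = f := by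
    intro f
    have h := T_comp (A := A) (B := A⁻¹)
    rw [hBA, T_one] at h
    have := congrArg (fun g : MvPolynomial (Fin n) k →ₐ[k] MvPolynomial (Fin n) k => g f) h
    simpa using this
  -- single span
  have hspan1 : Ideal.span {lin u} =
      Ideal.comap (T A⁻¹).toRingHom (Ideal.span {X xa}) := by
    refine le_antisymm (Ideal.span_le.mpr ?_) ?_
    · rintro x rfl
      show T A⁻¹ (lin u) ∈ Ideal.span {X xa}
      rw [hφa]
      exact Ideal.subset_span rfl
    · intro x hx
      have hx' : T A⁻¹ x ∈ Ideal.span {X xa} := hx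
      obtain ⟨d, hd⟩ := Ideal.mem_span_singleton'.mp hx'
      refine Ideal.mem_span_singleton'.mpr ⟨T A d, ?_⟩
      have := congrArg (T A) hd
      rw [map_mul, hψa, hc1] at this
      exact this
  -- pair span
  have hspan2 : Ideal.span {lin u, lin v} =
      Ideal.comap (T A⁻¹).toRingHom (Ideal.span {X xa, X xb}) := by
    refine le_antisymm (Ideal.span_le.mpr ?_) ?_
    · rintro x (rfl | rfl)
      · show T A⁻¹ (lin u) ∈ Ideal.span {X xa, X xb}
        rw [hφa]
        exact Ideal.subset_span (Set.mem_insert _ _)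
      · show T A⁻¹ (lin v) ∈ Ideal.span {X xa, X xb}
        rw [hφb]
        exact Ideal.subset_span (Set.mem_insert_of_mem _ rfl)
    · intro x hx
      have hx' : T A⁻¹ x ∈ Ideal.span {X xa, X xb} := hx
      obtain ⟨d, d', hd⟩ := Ideal.mem_span_pair.mp hx'
      refine Ideal.mem_span_pair.mpr ⟨T A d, T A d', ?_⟩
      have := congrArg (T A) hd
      rw [map_add, map_mul, map_mul, hψa, hψb, hc1] at this
      exact this
  have hlinu_ne : lin u ≠ 0 := by
    intro h
    have : T A⁻¹ (lin u) = 0 := by rw [h, map_zero]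
    rw [hφa] at this
    exact X_ne_zero _ this
  refine ⟨?_, ?_, ?_, ?_⟩
  · rw [← Ideal.span_singleton_prime hlinu_ne, hspan1]
    exact Ideal.IsPrime.comap _ (hK := isPrime_span_X_single xa)
  · rw [hspan2]
    exact Ideal.IsPrime.comap _ (hK := isPrime_span_X_pair xa xb)
  · intro h
    rw [hspan2] at h
    have : T A⁻¹ (lin w) ∈ Ideal.span {X xa, X xb} := h
    rw [hφc] at this
    exact X_not_mem_span_pair hca hcb this
  · intro h
    rw [hspan1] at h
    have : T A⁻¹ (lin v) ∈ Ideal.span {X xa} := h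
    rw [hφb] at this
    exact X_not_mem_span_single hba this

end Triple

/-- Product of pairwise non-dividing primes divides a common multiple. -/
lemma prods_dvd {α : Type*} [CommMonoidWithZero α] {ι : Type*} [DecidableEq ι]
    (s : Finset ι) (p : ι → α) (x : α)
    (hp : ∀ i ∈ s, Prime (p i))
    (hnd : ∀ i ∈ s, ∀ j ∈ s, i ≠ j → ¬ p i ∣ p j)
    (hd : ∀ i ∈ s, p i ∣ x) : (∏ i ∈ s, p i) ∣ x := by
  induction s using Finset.induction with
  | empty => simp
  | insert a s ha ih =>
    obtain ⟨y, rfl⟩ := ih (fun i hi => hp i (mem_insert_of_mem hi))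
      (fun i hi j hj hij => hnd i (mem_insert_of_mem hi) j (mem_insert_of_mem hj) hij)
      (fun i hi => hd i (mem_insert_of_mem hi))
    have hpa : Prime (p a) := hp a (mem_insert_self a s)
    have hda : p a ∣ (∏ i ∈ s, p i) * y := hd a (mem_insert_self a s)
    rcases hpa.dvd_mul.mp hda with h | h
    · obtain ⟨i, hi, hdvd⟩ := hpa.exists_mem_finset_dvd h
      exact absurd hdvd (hnd a (mem_insert_self a s) i (mem_insert_of_mem hi)
        (fun he => (he ▸ ha) hi))
    · obtain ⟨z, rfl⟩ := h
      rw [prod_insert ha]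
      exact ⟨z, by rw [← mul_assoc, mul_comm (∏ i ∈ s, p i) (p a)]⟩

open Ideal in
/-- "Mod M" lemma: if `f ∈ (M, L i)` for all `i ∈ s`, with suitable primality/genericity,
then `f ∈ (M, ∏ L i)`. -/
lemma mod_lemma {R : Type*} [CommRing R] {ι : Type*} [DecidableEq ι]
    (s : Finset ι) (L : ι → R) (M : R)
    (hprime : ∀ i ∈ s, (Ideal.span {M, L i}).IsPrime)
    (hnz : ∀ i ∈ s, L i ∉ Ideal.span {M})
    (hnd : ∀ i ∈ s, ∀ j ∈ s, i ≠ j → L j ∉ Ideal.span {M, L i})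
    {f : R} (hf : ∀ i ∈ s, f ∈ Ideal.span ({M, L i} : Set R)) :
    f ∈ Ideal.span ({M, ∏ i ∈ s, L i} : Set R) := by
  set π := Ideal.Quotient.mk (Ideal.span ({M} : Set R)) with hπ
  have hsurj : Function.Surjective π := Ideal.Quotient.mk_surjective
  have hker : RingHom.ker π = Ideal.span {M} := Ideal.mk_ker
  have hMzero : π M = 0 := by
    rw [Ideal.Quotient.eq_zero_iff_mem]
    exact Ideal.subset_span rfl
  have key : ∀ x : R, Ideal.map π (Ideal.span {M, x}) = Ideal.span {π x} := by
    intro x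
    rw [Ideal.map_span, Set.image_pair, hMzero]
    refine le_antisymm (Ideal.span_le.mpr ?_) (Ideal.span_mono (Set.subset_insert _ _))
    rintro y (rfl | rfl)
    · exact zero_mem _
    · exact Ideal.subset_span rfl
  have hle : ∀ x : R, RingHom.ker π ≤ Ideal.span {M, x} := by
    intro x
    rw [hker]
    exact Ideal.span_mono (Set.singleton_subset_iff.mpr (Set.mem_insert _ _))
  have comap_fact : ∀ x y : R, π y ∈ Ideal.map π (Ideal.span {M, x}) ↔ y ∈ Ideal.span {M, x} := by
    intro x y
    constructor
    · intro h
      obtain ⟨t, ht, hty⟩ := (Ideal.mem_map_iff_of_surjective π hsurj).mp h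
      have : y - t ∈ RingHom.ker π := by
        simp [RingHom.mem_ker, map_sub, hty]
      have h2 : y - t ∈ Ideal.span {M, x} := hle x this
      have := add_mem h2 ht
      simpa using this
    · exact fun h => Ideal.mem_map_of_mem π h
  have hprime' : ∀ i ∈ s, Prime (π (L i)) := by
    intro i hi
    have h0 : π (L i) ≠ 0 := by
      rw [Ne, Ideal.Quotient.eq_zero_iff_mem]
      exact hnz i hi
    rw [← Ideal.span_singleton_prime h0, ← key (L i)]
    exact Ideal.map_isPrime_of_surjective hsurj (hle (L i)) (H := hprime i hi)
  have hnd' : ∀ i ∈ s, ∀ j ∈ s, i ≠ j → ¬ π (L i) ∣ π (L j) := by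
    intro i hi j hj hij h
    have : π (L j) ∈ Ideal.span {π (L i)} := Ideal.mem_span_singleton.mpr h
    rw [← key (L i), comap_fact] at this
    exact hnd i hi j hj hij this
  have hd : ∀ i ∈ s, π (L i) ∣ π f := by
    intro i hi
    have : π f ∈ Ideal.span {π (L i)} := by
      rw [← key (L i)]
      exact Ideal.mem_map_of_mem π (hf i hi)
    exact Ideal.mem_span_singleton.mp this
  have hprod : (∏ i ∈ s, π (L i)) ∣ π f := prods_dvd s (fun i => π (L i)) (π f) hprime' hnd' hd
  have : π f ∈ Ideal.span {π (∏ i ∈ s, L i)} := by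
    rw [map_prod]
    exact Ideal.mem_span_singleton.mpr hprod
  rw [← key (∏ i ∈ s, L i), comap_fact] at this
  exact this

open Ideal in
/-- The hard inclusion, by induction on `s`. -/
lemma down {R : Type*} [CommRing R] {ι : Type*} [DecidableEq ι] (L : ι → R) :
    ∀ s : Finset ι, 2 ≤ s.card →
    (3 ≤ s.card →
      (∀ i ∈ s, ∀ j ∈ s, i ≠ j → (Ideal.span {L i, L j}).IsPrime) ∧
      (∀ i ∈ s, ∀ j ∈ s, i ≠ j → L j ∉ Ideal.span {L i}) ∧
      (∀ i ∈ s, ∀ j ∈ s, ∀ l ∈ s, i ≠ j → i ≠ l → j ≠ l → L l ∉ Ideal.span {L i, L j})) →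
    ∀ f : R, (∀ i ∈ s, ∀ j ∈ s, i ≠ j → f ∈ Ideal.span ({L i, L j} : Set R)) →
      f ∈ Ideal.span ((fun i => ∏ j ∈ s.erase i, L j) '' ↑s) := by
  intro s
  induction s using Finset.strongInduction with
  | _ s ih =>
  intro h2 hyp f hf
  by_cases hc : s.card = 2
  · -- base case
    obtain ⟨i, j, hij, rfl⟩ := Finset.card_eq_two.mp hc
    have hei : ({i, j} : Finset ι).erase i = {j} := Finset.erase_insert (by simp [hij])
    have hej : ({i, j} : Finset ι).erase j = {i} := by
      rw [Finset.pair_comm]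
      exact Finset.erase_insert (by simp [hij.symm])
    refine Ideal.span_le.mpr ?_ (hf i (by simp) j (by simp) hij)
    rintro x (rfl | rfl)
    · exact Ideal.subset_span ⟨j, by simp, by beta_reduce; rw [hej, Finset.prod_singleton]⟩
    · exact Ideal.subset_span ⟨i, by simp, by beta_reduce; rw [hei, Finset.prod_singleton]⟩
  · -- inductive step: card s ≥ 3
    have h3 : 3 ≤ s.card := by omega
    obtain ⟨hpair, hnd, htrip⟩ := hyp h3
    obtain ⟨a, ha⟩ : s.Nonempty := Finset.card_pos.mp (by omega)
    set s' := s.erase a with hs'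
    have hsub : ∀ i ∈ s', i ∈ s := fun i hi => Finset.mem_of_mem_erase hi
    have hne : ∀ i ∈ s', i ≠ a := fun i hi => Finset.ne_of_mem_erase hi
    have hcard' : 2 ≤ s'.card := by
      rw [hs', Finset.card_erase_of_mem ha]; omega
    -- apply mod_lemma with M = L a
    have hmod : f ∈ Ideal.span ({L a, ∏ i ∈ s', L i} : Set R) := by
      apply mod_lemma s' L (L a)
      · exact fun i hi => hpair a ha i (hsub i hi) (hne i hi).symm
      · exact fun i hi => hnd a ha i (hsub i hi) (hne i hi).symm
      · intro i hi j hj hij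
        exact htrip a ha i (hsub i hi) j (hsub j hj) (hne i hi).symm (hne j hj).symm hij
      · exact fun i hi => hf a ha i (hsub i hi) (hne i hi).symm
    obtain ⟨g, q, hgq⟩ := Ideal.mem_span_pair.mp hmod
    set D := ∏ i ∈ s', L i with hD
    -- g ∈ every span {L i, L j} for i ≠ j in s'
    have hg : ∀ i ∈ s', ∀ j ∈ s', i ≠ j → g ∈ Ideal.span ({L i, L j} : Set R) := by
      intro i hi j hj hij
      have hDmem : D ∈ Ideal.span ({L i, L j} : Set R) := by
        have : L i ∣ D := Finset.dvd_prod_of_mem L hi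
        have := Ideal.mem_span_singleton.mpr this
        exact Ideal.span_mono (Set.singleton_subset_iff.mpr (Set.mem_insert _ _)) this
      have hgla : g * L a ∈ Ideal.span ({L i, L j} : Set R) := by
        have : g * L a = f - q * D := by rw [← hgq]; ring
        rw [this]
        exact sub_mem (hf i (hsub i hi) j (hsub j hj) hij) (Ideal.mul_mem_left _ q hDmem)
      have hprime := hpair i (hsub i hi) j (hsub j hj) hij
      rcases hprime.mem_or_mem hgla with h | h
      · exact h
      · exact absurd h (htrip i (hsub i hi) j (hsub j hj) a ha hij (hne i hi) (hne j hj))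
    -- IH on s'
    have hgmem : g ∈ Ideal.span ((fun i => ∏ j ∈ s'.erase i, L j) '' ↑s') := by
      apply ih s' (Finset.erase_ssubset ha) hcard' _ g hg
      intro h3'
      refine ⟨fun i hi j hj hij => hpair i (hsub i hi) j (hsub j hj) hij,
        fun i hi j hj hij => hnd i (hsub i hi) j (hsub j hj) hij,
        fun i hi j hj l hl hij hil hjl =>
          htrip i (hsub i hi) j (hsub j hj) l (hsub l hl) hij hil hjl⟩
    -- assemble
    have hqD : q * D ∈ Ideal.span ((fun i => ∏ j ∈ s.erase i, L j) '' ↑s) := by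
      apply Ideal.mul_mem_left
      exact Ideal.subset_span ⟨a, ha, rfl⟩
    have hgLa : g * L a ∈ Ideal.span ((fun i => ∏ j ∈ s.erase i, L j) '' ↑s) := by
      refine Submodule.span_induction ?_ ?_ ?_ ?_ hgmem
        (p := fun x _ => x * L a ∈ Ideal.span ((fun i => ∏ j ∈ s.erase i, L j) '' ↑s))
      · rintro x ⟨i, hi, rfl⟩
        have hia : a ∈ s.erase i := Finset.mem_erase.mpr ⟨(hne i hi).symm, ha⟩
        have hcomm : s'.erase i = (s.erase i).erase a := by
          rw [hs', Finset.erase_right_comm]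
        have : (∏ j ∈ s'.erase i, L j) * L a = ∏ j ∈ s.erase i, L j := by
          rw [hcomm, mul_comm, Finset.mul_prod_erase _ _ hia]
        rw [this]
        exact Ideal.subset_span ⟨i, hsub i hi, rfl⟩
      · simp
      · intro x y _ _ hx hy
        rw [add_mul]
        exact add_mem hx hy
      · intro r x _ hx
        rw [smul_eq_mul, mul_assoc]
        exact Ideal.mul_mem_left _ r hx
    have : f = g * L a + q * D := hgq.symm
    rw [this]
    exact add_mem hgLa hqD


lemma up_eq {R : Type*} [CommRing R] {r : ℕ} (L : Fin r → R) :
    Ideal.span (Set.range fun i : Fin r => ∏ j ∈ Finset.univ.erase i, L j)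
      ≤ (⨅ (i : Fin r) (j : Fin r) (_ : i < j), Ideal.span {L i, L j}) := by
  rw [Ideal.span_le]
  rintro x ⟨i, rfl⟩
  simp only [SetLike.mem_coe, Ideal.mem_iInf]
  intro i' j' hlt
  by_cases hii : i' = i
  · subst hii
    have hji : j' ≠ i' := ne_of_gt hlt
    have hdvd : L j' ∣ ∏ j ∈ Finset.univ.erase i', L j :=
      Finset.dvd_prod_of_mem L (Finset.mem_erase.mpr ⟨hji, Finset.mem_univ _⟩)
    have h1 : (∏ j ∈ Finset.univ.erase i', L j) ∈ Ideal.span {L j'} :=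
      Ideal.mem_span_singleton.mpr hdvd
    have h2 : Ideal.span {L j'} ≤ Ideal.span {L i', L j'} :=
      Ideal.span_mono (Set.singleton_subset_iff.mpr (Set.mem_insert_of_mem _ rfl))
    exact h2 h1
  · have hdvd : L i' ∣ ∏ j ∈ Finset.univ.erase i, L j :=
      Finset.dvd_prod_of_mem L (Finset.mem_erase.mpr ⟨hii, Finset.mem_univ _⟩)
    have h1 : (∏ j ∈ Finset.univ.erase i, L j) ∈ Ideal.span {L i'} :=
      Ideal.mem_span_singleton.mpr hdvd
    have h2 : Ideal.span {L i'} ≤ Ideal.span {L i', L j'} :=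
      Ideal.span_mono (Set.singleton_subset_iff.mpr (Set.mem_insert _ _))
    exact h2 h1

open Ideal in
lemma down_eq {R : Type*} [CommRing R] {r : ℕ} (hr : 2 ≤ r) (L : Fin r → R)
    (hyps : 3 ≤ r →
      (∀ i j : Fin r, i ≠ j → (Ideal.span {L i, L j}).IsPrime) ∧
      (∀ i j : Fin r, i ≠ j → L j ∉ Ideal.span {L i}) ∧
      (∀ i j l : Fin r, i ≠ j → i ≠ l → j ≠ l → L l ∉ Ideal.span {L i, L j})) :
    (⨅ (i : Fin r) (j : Fin r) (_ : i < j), Ideal.span {L i, L j})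
      ≤ Ideal.span (Set.range fun i : Fin r => ∏ j ∈ Finset.univ.erase i, L j) := by
  have hcard : (Finset.univ : Finset (Fin r)).card = r := by
    rw [Finset.card_univ, Fintype.card_fin]
  intro f hf
  simp only [Ideal.mem_iInf] at hf
  have hf' : ∀ i ∈ (Finset.univ : Finset (Fin r)), ∀ j ∈ (Finset.univ : Finset (Fin r)),
      i ≠ j → f ∈ Ideal.span ({L i, L j} : Set R) := by
    intro i _ j _ hij
    rcases hij.lt_or_gt with h | h
    · exact hf i j h
    · have := hf j i h
      rwa [Set.pair_comm] at this
  have h2' : 2 ≤ (Finset.univ : Finset (Fin r)).card := by rw [hcard]; exact hr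
  have hyps' : 3 ≤ (Finset.univ : Finset (Fin r)).card →
      (∀ i ∈ (Finset.univ : Finset (Fin r)), ∀ j ∈ (Finset.univ : Finset (Fin r)),
        i ≠ j → (Ideal.span {L i, L j}).IsPrime) ∧
      (∀ i ∈ (Finset.univ : Finset (Fin r)), ∀ j ∈ (Finset.univ : Finset (Fin r)),
        i ≠ j → L j ∉ Ideal.span {L i}) ∧
      (∀ i ∈ (Finset.univ : Finset (Fin r)), ∀ j ∈ (Finset.univ : Finset (Fin r)),
        ∀ l ∈ (Finset.univ : Finset (Fin r)),
        i ≠ j → i ≠ l → j ≠ l → L l ∉ Ideal.span {L i, L j}) := by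
    intro h3
    rw [hcard] at h3
    obtain ⟨hpair, hnd, htrip⟩ := hyps h3
    exact ⟨fun i _ j _ hij => hpair i j hij, fun i _ j _ hij => hnd i j hij,
      fun i _ j _ l _ hij hil hjl => htrip i j l hij hil hjl⟩
  have hres := down L Finset.univ h2' hyps' f hf'
  rwa [Finset.coe_univ, Set.image_univ] at hres

lemma main_eq {R : Type*} [CommRing R] {r : ℕ} (hr : 2 ≤ r) (L : Fin r → R)
    (hyps : 3 ≤ r →
      (∀ i j : Fin r, i ≠ j → (Ideal.span {L i, L j}).IsPrime) ∧
      (∀ i j : Fin r, i ≠ j → L j ∉ Ideal.span {L i}) ∧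
      (∀ i j l : Fin r, i ≠ j → i ≠ l → j ≠ l → L l ∉ Ideal.span {L i, L j})) :
    (⨅ (i : Fin r) (j : Fin r) (_ : i < j), Ideal.span {L i, L j})
      = Ideal.span (Set.range fun i : Fin r => ∏ j ∈ Finset.univ.erase i, L j) :=
  le_antisymm (down_eq hr L hyps) (up_eq L)

/-- For a general choice of `r ≥ 2` linear forms `L 1, …, L r` in `n ≥ 3` variables
(over an algebraically closed field), the intersection `⋂_{i<j} (L i, L j)` equals the ideal
generated by the products of all but one of the `L i`.  "General" means: on the nonempty
Zariski-open subset of the parameter space `(R₁)^r` where some nonzero polynomial `P` in the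
coefficients does not vanish. -/
theorem stmt3 {k : Type*} [Field k] [IsAlgClosed k] {n r : ℕ} (hn : 3 ≤ n) (hr : 2 ≤ r) :
    ∃ P : MvPolynomial (Fin r × Fin n) k, P ≠ 0 ∧
      ∀ c : Fin r × Fin n → k, eval c P ≠ 0 →
        (⨅ (i : Fin r) (j : Fin r) (_ : i < j),
            Ideal.span {lin (fun x => c (i, x)), lin (fun x => c (j, x))})
        = Ideal.span (Set.range fun i : Fin r =>
            ∏ j ∈ Finset.univ.erase i, lin (fun x => c (j, x))) := by
  classical
  set s3 : Finset (Fin r × Fin r × Fin r) :=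
    Finset.univ.filter (fun t => t.1 ≠ t.2.1 ∧ t.1 ≠ t.2.2 ∧ t.2.1 ≠ t.2.2) with hs3
  set FM : Fin r × Fin r × Fin r → MvPolynomial (Fin r × Fin n) k := fun t =>
    (Matrix.of fun p q : Fin 3 =>
      X (![t.1, t.2.1, t.2.2] p, (⟨(q : ℕ), lt_of_lt_of_le q.2 hn⟩ : Fin n))).det with hFM
  refine ⟨∏ t ∈ s3, FM t, ?_, ?_⟩
  · -- the polynomial is nonzero: evaluate at a Vandermonde-type point
    set tval : Fin r → k := fun i => (Infinite.natEmbedding k) (i : ℕ) with htval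
    have htinj : Function.Injective tval := fun a b h =>
      Fin.ext ((Infinite.natEmbedding k).injective h)
    set c₀ : Fin r × Fin n → k := fun p => tval p.1 ^ ((p.2 : ℕ)) with hc₀
    intro hP0
    have heval := congrArg (eval c₀) hP0
    rw [map_zero, map_prod] at heval
    have hfac : ∀ t ∈ s3, eval c₀ (FM t) ≠ 0 := by
      intro t ht
      rw [hFM]
      rw [RingHom.map_det, RingHom.mapMatrix_apply]
      have hmat : (Matrix.of fun p q : Fin 3 =>
          X (![t.1, t.2.1, t.2.2] p, (⟨(q : ℕ), lt_of_lt_of_le q.2 hn⟩ : Fin n))).map (eval c₀)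
          = Matrix.vandermonde (fun p : Fin 3 => tval (![t.1, t.2.1, t.2.2] p)) := by
        funext p q
        simp [Matrix.vandermonde, Matrix.map_apply, eval_X, hc₀]
      rw [hmat]
      apply Matrix.det_vandermonde_ne_zero_iff.mpr
      intro p q hpq
      have hv := htinj hpq
      rw [hs3, Finset.mem_filter] at ht
      obtain ⟨-, h1, h2, h3⟩ := ht
      fin_cases p <;> fin_cases q <;> simp_all
    exact Finset.prod_ne_zero_iff.mpr hfac heval
  · intro c hc
    have hdet : ∀ i j l : Fin r, i ≠ j → i ≠ l → j ≠ l →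
        (Matrix.of fun p q : Fin 3 =>
          ![(fun x => c (i, x)), (fun x => c (j, x)), (fun x => c (l, x))] p
            (⟨(q : ℕ), lt_of_lt_of_le q.2 hn⟩ : Fin n)).det ≠ 0 := by
      intro i j l h1 h2 h3
      have hmem : (i, j, l) ∈ s3 := by simp [hs3, h1, h2, h3]
      have hne : eval c (FM (i, j, l)) ≠ 0 := by
        intro h0
        exact hc (by rw [map_prod]; exact Finset.prod_eq_zero hmem h0)
      rw [hFM, RingHom.map_det, RingHom.mapMatrix_apply] at hne
      have hmm : (Matrix.of fun p q : Fin 3 =>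
          X (![i, j, l] p, (⟨(q : ℕ), lt_of_lt_of_le q.2 hn⟩ : Fin n))).map (eval c)
          = Matrix.of fun p q : Fin 3 =>
            ![(fun x => c (i, x)), (fun x => c (j, x)), (fun x => c (l, x))] p
              (⟨(q : ℕ), lt_of_lt_of_le q.2 hn⟩ : Fin n) := by
        funext p q
        fin_cases p <;> simp [eval_X]
      rw [hmm] at hne
      exact hne
    have key : ∀ i j l : Fin r, i ≠ j → i ≠ l → j ≠ l →
        Prime (lin fun x => c (i, x)) ∧
        (Ideal.span {lin fun x => c (i, x), lin fun x => c (j, x)}).IsPrime ∧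
        ((lin fun x => c (l, x)) ∉
          Ideal.span {lin fun x => c (i, x), lin fun x => c (j, x)}) ∧
        ((lin fun x => c (j, x)) ∉ Ideal.span {lin fun x => c (i, x)}) := by
      intro i j l h1 h2 h3
      exact triple_facts hn _ _ _ (hdet i j l h1 h2 h3)
    have H : 3 ≤ r →
        (∀ i j : Fin r, i ≠ j →
          (Ideal.span {lin fun x => c (i, x), lin fun x => c (j, x)}).IsPrime) ∧
        (∀ i j : Fin r, i ≠ j →
          (lin fun x => c (j, x)) ∉ Ideal.span {lin fun x => c (i, x)}) ∧
        (∀ i j l : Fin r, i ≠ j → i ≠ l → j ≠ l →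
          (lin fun x => c (l, x)) ∉
            Ideal.span {lin fun x => c (i, x), lin fun x => c (j, x)}) := by
      intro h3r
      have hthird : ∀ i j : Fin r, ∃ l : Fin r, l ≠ i ∧ l ≠ j := by
        intro i j
        have hcompl : (({i, j} : Finset (Fin r))ᶜ).Nonempty := by
          rw [← Finset.card_pos, Finset.card_compl]
          have h2c : ({i, j} : Finset (Fin r)).card ≤ 2 :=
            le_trans (Finset.card_insert_le _ _) (by simp)
          have : Fintype.card (Fin r) = r := Fintype.card_fin r
          omega
        obtain ⟨l, hl⟩ := hcompl
        rw [Finset.mem_compl] at hl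
        simp only [Finset.mem_insert, Finset.mem_singleton, not_or] at hl
        exact ⟨l, hl.1, hl.2⟩
      refine ⟨?_, ?_, ?_⟩
      · intro i j hij
        obtain ⟨l, hli, hlj⟩ := hthird i j
        exact (key i j l hij (Ne.symm hli) (Ne.symm hlj)).2.1
      · intro i j hij
        obtain ⟨l, hli, hlj⟩ := hthird i j
        exact (key i j l hij (Ne.symm hli) (Ne.symm hlj)).2.2.2
      · intro i j l hij hil hjl
        exact (key i j l hij hil hjl).2.2.1
    exact main_eq hr (fun i => lin fun x => c (i, x)) H
end

section
/- Let k be an algebraically closed field and R = k[x,y,z]. For every choice of linear forms L_1, L_2, N_1, N_2 ∈ R_1, the degree-3 graded component of the ideal (L_1L_2, L_1^2) + (N_1N_2, N_1^2) has k-vector space dimension at most 9 (strictly less than dim R_3 = 10), and for a general choice of L_1, L_2, N_1, N_2 this dimension equals exactly 9. Equivalently, for M = Z_1^2Z_2 and n = 3, dim σ_2(X_M) = 8 < 9, so X_M has 2-defect 1. -/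
open MvPolynomial Finset

/-! ### Auxiliary material on exponents in three variables -/

noncomputable def m3 (a b c : ℕ) : Fin 3 →₀ ℕ :=
  Finsupp.single 0 a + Finsupp.single 1 b + Finsupp.single 2 c

lemma eq_m3 (d : Fin 3 →₀ ℕ) : d = m3 (d 0) (d 1) (d 2) := by
  ext i; fin_cases i <;> simp [m3, Finsupp.single_apply]

lemma degree_eq3 (d : Fin 3 →₀ ℕ) : d.degree = d 0 + d 1 + d 2 := by
  rw [Finsupp.degree_apply, show (∑ i ∈ d.support, d i) = d.sum (fun _ n => n) from rfl,
    Finsupp.sum_fintype] <;> simp [Fin.sum_univ_three]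

lemma m3_degree (a b c : ℕ) : (m3 a b c).degree = a + b + c := by
  rw [degree_eq3]; simp [m3, Finsupp.single_apply]

lemma m3_inj {a b c a' b' c' : ℕ} (h : m3 a b c = m3 a' b' c') : a = a' ∧ b = b' ∧ c = c' := by
  have h0 := DFunLike.congr_fun h 0
  have h1 := DFunLike.congr_fun h 1
  have h2 := DFunLike.congr_fun h 2
  simp [m3, Finsupp.single_apply] at h0 h1 h2
  exact ⟨h0, h1, h2⟩

lemma m3_eq_iff {a b c a' b' c' : ℕ} : m3 a b c = m3 a' b' c' ↔ a = a' ∧ b = b' ∧ c = c' := by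
  constructor
  · exact m3_inj
  · rintro ⟨rfl, rfl, rfl⟩; rfl

noncomputable def e10 : Fin 10 → (Fin 3 →₀ ℕ) :=
  ![m3 3 0 0, m3 2 1 0, m3 2 0 1, m3 1 2 0, m3 1 1 1, m3 1 0 2,
    m3 0 3 0, m3 0 2 1, m3 0 1 2, m3 0 0 3]

lemma e10_cover (d : Fin 3 →₀ ℕ) (h : d.degree = 3) : ∃ j : Fin 10, d = e10 j := by
  rw [degree_eq3] at h
  have hd := eq_m3 d
  set a := d 0; set b := d 1; set c := d 2
  have ha : a ≤ 3 := by omega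
  have hb : b ≤ 3 := by omega
  have hc : c ≤ 3 := by omega
  interval_cases a <;> interval_cases b <;> interval_cases c <;>
    first
    | omega
    | exact ⟨0, hd⟩ | exact ⟨1, hd⟩ | exact ⟨2, hd⟩ | exact ⟨3, hd⟩ | exact ⟨4, hd⟩
    | exact ⟨5, hd⟩ | exact ⟨6, hd⟩ | exact ⟨7, hd⟩ | exact ⟨8, hd⟩ | exact ⟨9, hd⟩

lemma e10_inj : Function.Injective e10 := by
  intro i j h
  fin_cases i <;> fin_cases j <;> simp_all [e10] <;> exact absurd (m3_inj h) (by omega)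

/-! ### The degree-3 homogeneous component is 10-dimensional -/

section HH
variable {k : Type*} [Field k]

lemma H_eq_span :
    (homogeneousSubmodule (Fin 3) k 3 : Submodule k (MvPolynomial (Fin 3) k)) =
      Submodule.span k (Set.range fun j : Fin 10 => (monomial (e10 j) (1 : k))) := by
  apply le_antisymm
  · intro p hp
    rw [mem_homogeneousSubmodule] at hp
    rw [← p.support_sum_monomial_coeff]
    refine Submodule.sum_mem _ fun d hd => ?_
    have hdeg : d.degree = 3 := by
      rw [Finsupp.degree_eq_weight_one]; exact hp (mem_support_iff.mp hd)
    obtain ⟨j, rfl⟩ := e10_cover d hdeg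
    have : (monomial (e10 j)) (coeff (e10 j) p) = coeff (e10 j) p • monomial (e10 j) (1:k) := by
      rw [smul_monomial, smul_eq_mul, mul_one]
    rw [this]
    exact Submodule.smul_mem _ _ (Submodule.subset_span ⟨j, rfl⟩)
  · rw [Submodule.span_le]
    rintro _ ⟨j, rfl⟩
    rw [SetLike.mem_coe, mem_homogeneousSubmodule]
    apply isHomogeneous_monomial
    fin_cases j <;> exact m3_degree _ _ _

lemma li10 : LinearIndependent k (fun j : Fin 10 => (monomial (e10 j) (1 : k))) := by
  have := ((basisMonomials (Fin 3) k).linearIndependent).comp e10 e10_inj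
  rw [coe_basisMonomials] at this
  exact this

instance Hfd : FiniteDimensional k
    ↥(homogeneousSubmodule (Fin 3) k 3 : Submodule k (MvPolynomial (Fin 3) k)) := by
  rw [H_eq_span]
  exact FiniteDimensional.span_of_finite k (Set.finite_range _)

lemma H_finrank :
    Module.finrank k
      ↥(homogeneousSubmodule (Fin 3) k 3 : Submodule k (MvPolynomial (Fin 3) k)) = 10 := by
  rw [H_eq_span, finrank_span_eq_card li10]
  simp

/-! ### Degree-1 forms and common zeros -/

lemma H1_eq_span :
    (homogeneousSubmodule (Fin 3) k 1 : Submodule k (MvPolynomial (Fin 3) k)) =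
      Submodule.span k (Set.range fun i : Fin 3 => (X i : MvPolynomial (Fin 3) k)) := by
  apply le_antisymm
  · intro p hp
    rw [mem_homogeneousSubmodule] at hp
    rw [← p.support_sum_monomial_coeff]
    refine Submodule.sum_mem _ fun d hd => ?_
    have hdeg : d.degree = 1 := by
      rw [Finsupp.degree_eq_weight_one]; exact hp (mem_support_iff.mp hd)
    have h3 : d 0 + d 1 + d 2 = 1 := by rw [← degree_eq3]; exact hdeg
    have hd3 := eq_m3 d
    have : ∃ i : Fin 3, d = Finsupp.single i 1 := by
      set a := d 0; set b := d 1; set c := d 2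
      have : a ≤ 1 := by omega
      have : b ≤ 1 := by omega
      have : c ≤ 1 := by omega
      interval_cases a <;> interval_cases b <;> interval_cases c <;>
        first
        | omega
        | (refine ⟨0, ?_⟩; rw [hd3]; ext i; fin_cases i <;>
            (simp [m3, Finsupp.single_apply]; done))
        | (refine ⟨1, ?_⟩; rw [hd3]; ext i; fin_cases i <;>
            (simp [m3, Finsupp.single_apply]; done))
        | (refine ⟨2, ?_⟩; rw [hd3]; ext i; fin_cases i <;>
            (simp [m3, Finsupp.single_apply]; done))
    obtain ⟨i, rfl⟩ := this
    have hX : (monomial (Finsupp.single i 1)) (coeff (Finsupp.single i 1) p)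
        = coeff (Finsupp.single i 1) p • (X i : MvPolynomial (Fin 3) k) := by
      rw [smul_eq_C_mul, ← C_mul_X_pow_eq_monomial, pow_one]
    rw [hX]
    exact Submodule.smul_mem _ _ (Submodule.subset_span ⟨i, rfl⟩)
  · rw [Submodule.span_le]
    rintro _ ⟨i, rfl⟩
    exact isHomogeneous_X _ _

/-- Two homogeneous degree-1 polynomials in three variables have a common nonzero zero. -/
lemma common_zero (L N : MvPolynomial (Fin 3) k)
    (hL : L.IsHomogeneous 1) (hN : N.IsHomogeneous 1) :
    ∃ p : Fin 3 → k, p ≠ 0 ∧ eval p L = 0 ∧ eval p N = 0 := by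
  have hL' : L ∈ Submodule.span k (Set.range fun i : Fin 3 => (X i : MvPolynomial (Fin 3) k)) := by
    rw [← H1_eq_span]; exact hL
  have hN' : N ∈ Submodule.span k (Set.range fun i : Fin 3 => (X i : MvPolynomial (Fin 3) k)) := by
    rw [← H1_eq_span]; exact hN
  rw [Submodule.mem_span_range_iff_exists_fun] at hL' hN'
  obtain ⟨a, ha⟩ := hL'
  obtain ⟨b, hb⟩ := hN'
  set M : Matrix (Fin 2) (Fin 3) k := ![a, b] with hM
  have hker : LinearMap.ker M.mulVecLin ≠ ⊥ := by
    intro h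
    have hinj : Function.Injective M.mulVecLin := by
      rwa [← LinearMap.ker_eq_bot]
    have := LinearMap.finrank_le_finrank_of_injective hinj
    simp [Module.finrank_pi] at this
  obtain ⟨p, hp, hp0⟩ := Submodule.ne_bot_iff _ |>.mp hker
  have hmv := LinearMap.mem_ker.mp hp
  have h0 := congrFun hmv 0
  have h1 := congrFun hmv 1
  rw [Matrix.mulVecLin_apply] at h0 h1
  simp [Matrix.mulVecLin_apply, Matrix.mulVec, hM, dotProduct] at h0 h1
  rw [Fin.sum_univ_three] at h0 h1
  refine ⟨p, hp0, ?_, ?_⟩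
  · rw [← ha]; simp [smul_eval, Fin.sum_univ_three]; linear_combination h0
  · rw [← hb]; simp [smul_eval, Fin.sum_univ_three]; linear_combination h1

/-! ### Part (a): the upper bound 9 -/

/-- evaluation at a point, as a linear map -/
noncomputable def evalLM (p : Fin 3 → k) : MvPolynomial (Fin 3) k →ₗ[k] k where
  toFun := eval p
  map_add' := by simp
  map_smul' := by simp [smul_eval]

lemma partA (L₁ L₂ N₁ N₂ : MvPolynomial (Fin 3) k)
    (h₁ : L₁.IsHomogeneous 1) (h₃ : N₁.IsHomogeneous 1) :
    Module.finrank k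
      ↥(Submodule.restrictScalars k
          (Ideal.span {L₁ * L₂, L₁ ^ 2} ⊔ Ideal.span {N₁ * N₂, N₁ ^ 2})
        ⊓ homogeneousSubmodule (Fin 3) k 3) ≤ 9 := by
  obtain ⟨p, hp0, hL, hN⟩ := common_zero L₁ N₁ h₁ h₃
  set H := (homogeneousSubmodule (Fin 3) k 3 : Submodule k (MvPolynomial (Fin 3) k))
  set K := H ⊓ LinearMap.ker (evalLM p) with hK
  have hIker : (Ideal.span {L₁ * L₂, L₁ ^ 2} ⊔ Ideal.span {N₁ * N₂, N₁ ^ 2} : Ideal _)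
      ≤ RingHom.ker (eval p) := by
    apply sup_le <;> rw [Ideal.span_le] <;> rintro q hq <;>
      simp only [Set.mem_insert_iff, Set.mem_singleton_iff] at hq <;>
      rcases hq with rfl | rfl <;>
      simp [RingHom.mem_ker, hL, hN]
  have hWK : Submodule.restrictScalars k
      (Ideal.span {L₁ * L₂, L₁ ^ 2} ⊔ Ideal.span {N₁ * N₂, N₁ ^ 2}) ⊓ H ≤ K := by
    rintro x ⟨hx1, hx2⟩
    exact ⟨hx2, LinearMap.mem_ker.mpr (hIker hx1)⟩
  have hKH : K < H := by
    rw [lt_iff_le_and_ne]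
    refine ⟨inf_le_left, fun h => ?_⟩
    obtain ⟨i, hi⟩ := Function.ne_iff.mp hp0
    have hq : (X i ^ 3 : MvPolynomial (Fin 3) k) ∈ H := by
      have := (isHomogeneous_X k i).pow 3
      exact (mem_homogeneousSubmodule _ _).mpr (by simpa using this)
    rw [← h] at hq
    have : eval p (X i ^ 3 : MvPolynomial (Fin 3) k) = 0 := hq.2
    simp at this
    exact hi this
  haveI : FiniteDimensional k K := Submodule.finiteDimensional_of_le (inf_le_left : K ≤ H)
  have h1 : Module.finrank k
      ↥(Submodule.restrictScalars k
          (Ideal.span {L₁ * L₂, L₁ ^ 2} ⊔ Ideal.span {N₁ * N₂, N₁ ^ 2}) ⊓ H)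
      ≤ Module.finrank k K := Submodule.finrank_mono hWK
  have h2 : Module.finrank k K < Module.finrank k H := Submodule.finrank_lt_finrank_of_lt hKH
  rw [H_finrank] at h2
  omega

end HH

/-! ### Part (b): the generic determinant -/

section rows
variable {R : Type*} [CommSemiring R]

noncomputable def rowsOf (A B Cc D : MvPolynomial (Fin 3) R) : Fin 9 → MvPolynomial (Fin 3) R :=
  ![X 0 * (A * B), X 1 * (A * B), X 2 * (A * B), X 0 * A ^ 2, X 2 * A ^ 2,
    X 1 * (Cc * D), X 2 * (Cc * D), X 0 * Cc ^ 2, X 2 * Cc ^ 2]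

noncomputable def cols : Fin 9 → (Fin 3 →₀ ℕ) :=
  ![m3 2 1 0, m3 1 2 0, m3 1 1 1, m3 3 0 0, m3 2 0 1, m3 0 2 1, m3 0 1 2, m3 1 0 2, m3 0 0 3]

@[simp] lemma rowsOf_0 (A B Cc D : MvPolynomial (Fin 3) R) : rowsOf A B Cc D 0 = X 0 * (A * B) := rfl
@[simp] lemma rowsOf_1 (A B Cc D : MvPolynomial (Fin 3) R) : rowsOf A B Cc D 1 = X 1 * (A * B) := rfl
@[simp] lemma rowsOf_2 (A B Cc D : MvPolynomial (Fin 3) R) : rowsOf A B Cc D 2 = X 2 * (A * B) := rfl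
@[simp] lemma rowsOf_3 (A B Cc D : MvPolynomial (Fin 3) R) : rowsOf A B Cc D 3 = X 0 * A ^ 2 := rfl
@[simp] lemma rowsOf_4 (A B Cc D : MvPolynomial (Fin 3) R) : rowsOf A B Cc D 4 = X 2 * A ^ 2 := rfl
@[simp] lemma rowsOf_5 (A B Cc D : MvPolynomial (Fin 3) R) : rowsOf A B Cc D 5 = X 1 * (Cc * D) := rfl
@[simp] lemma rowsOf_6 (A B Cc D : MvPolynomial (Fin 3) R) : rowsOf A B Cc D 6 = X 2 * (Cc * D) := rfl
@[simp] lemma rowsOf_7 (A B Cc D : MvPolynomial (Fin 3) R) : rowsOf A B Cc D 7 = X 0 * Cc ^ 2 := rfl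
@[simp] lemma rowsOf_8 (A B Cc D : MvPolynomial (Fin 3) R) : rowsOf A B Cc D 8 = X 2 * Cc ^ 2 := rfl
@[simp] lemma cols_0 : cols 0 = m3 2 1 0 := rfl
@[simp] lemma cols_1 : cols 1 = m3 1 2 0 := rfl
@[simp] lemma cols_2 : cols 2 = m3 1 1 1 := rfl
@[simp] lemma cols_3 : cols 3 = m3 3 0 0 := rfl
@[simp] lemma cols_4 : cols 4 = m3 2 0 1 := rfl
@[simp] lemma cols_5 : cols 5 = m3 0 2 1 := rfl
@[simp] lemma cols_6 : cols 6 = m3 0 1 2 := rfl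
@[simp] lemma cols_7 : cols 7 = m3 1 0 2 := rfl
@[simp] lemma cols_8 : cols 8 = m3 0 0 3 := rfl

noncomputable def matOf (A B Cc D : MvPolynomial (Fin 3) R) : Matrix (Fin 9) (Fin 9) R :=
  fun i j => coeff (cols j) (rowsOf A B Cc D i)

lemma map_lin {T : Type*} [CommSemiring T] (f : R →+* T) {n : ℕ} (c : Fin n → R) :
    map f (lin c) = lin (fun i => f (c i)) := by
  simp [lin, map_sum]

lemma map_matOf {T : Type*} [CommSemiring T] (f : R →+* T) (A B Cc D : MvPolynomial (Fin 3) R)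
    (i j : Fin 9) :
    f (matOf A B Cc D i j) = matOf (map f A) (map f B) (map f Cc) (map f D) i j := by
  rw [matOf, matOf, ← coeff_map]
  congr 1
  fin_cases i <;> simp

lemma coeff_m3_m3 {a b c a' b' c' : ℕ} {r : R} :
    coeff (m3 a b c) (monomial (m3 a' b' c') r) = if a' = a ∧ b' = b ∧ c' = c then r else 0 := by
  rw [coeff_monomial]
  by_cases h : a' = a ∧ b' = b ∧ c' = c
  · rw [if_pos (m3_eq_iff.mpr h), if_pos h]
  · rw [if_neg (fun hh => h (m3_eq_iff.mp hh)), if_neg h]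

lemma Xmon (i j l : Fin 3) (a b c : ℕ)
    (h : (Finsupp.single i 1 + (Finsupp.single j 1 + Finsupp.single l 1) : Fin 3 →₀ ℕ) = m3 a b c) :
    (X i : MvPolynomial (Fin 3) R) * (X j * X l) = monomial (m3 a b c) 1 := by
  rw [← h]; simp [X, monomial_mul]

lemma Xmon2 (i j : Fin 3) (a b c : ℕ)
    (h : (Finsupp.single i 1 + (Finsupp.single j 1 + Finsupp.single j 1) : Fin 3 →₀ ℕ) = m3 a b c) :
    (X i : MvPolynomial (Fin 3) R) * X j ^ 2 = monomial (m3 a b c) 1 := by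
  rw [sq]; exact Xmon i j j a b c h

end rows

section partB
variable {k : Type*} [Field k]

lemma r0 : (X 0 : MvPolynomial (Fin 3) k) * (X 0 * X 1) = monomial (m3 2 1 0) 1 :=
  Xmon _ _ _ _ _ _ (by ext i; fin_cases i <;> simp [m3, Finsupp.single_apply])
lemma r1 : (X 1 : MvPolynomial (Fin 3) k) * (X 0 * X 1) = monomial (m3 1 2 0) 1 :=
  Xmon _ _ _ _ _ _ (by ext i; fin_cases i <;> simp [m3, Finsupp.single_apply])
lemma r2 : (X 2 : MvPolynomial (Fin 3) k) * (X 0 * X 1) = monomial (m3 1 1 1) 1 :=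
  Xmon _ _ _ _ _ _ (by ext i; fin_cases i <;> simp [m3, Finsupp.single_apply])
lemma r3 : (X 0 : MvPolynomial (Fin 3) k) * X 0 ^ 2 = monomial (m3 3 0 0) 1 :=
  Xmon2 _ _ _ _ _ (by ext i; fin_cases i <;> simp [m3, Finsupp.single_apply])
lemma r4 : (X 2 : MvPolynomial (Fin 3) k) * X 0 ^ 2 = monomial (m3 2 0 1) 1 :=
  Xmon2 _ _ _ _ _ (by ext i; fin_cases i <;> simp [m3, Finsupp.single_apply])
lemma r5 : (X 1 : MvPolynomial (Fin 3) k) * (X 2 * X 1) = monomial (m3 0 2 1) 1 :=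
  Xmon _ _ _ _ _ _ (by ext i; fin_cases i <;> simp [m3, Finsupp.single_apply])
lemma r6 : (X 2 : MvPolynomial (Fin 3) k) * (X 2 * X 1) = monomial (m3 0 1 2) 1 :=
  Xmon _ _ _ _ _ _ (by ext i; fin_cases i <;> simp [m3, Finsupp.single_apply])
lemma r7 : (X 0 : MvPolynomial (Fin 3) k) * X 2 ^ 2 = monomial (m3 1 0 2) 1 :=
  Xmon2 _ _ _ _ _ (by ext i; fin_cases i <;> simp [m3, Finsupp.single_apply])
lemma r8 : (X 2 : MvPolynomial (Fin 3) k) * X 2 ^ 2 = monomial (m3 0 0 3) 1 :=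
  Xmon2 _ _ _ _ _ (by ext i; fin_cases i <;> simp [m3, Finsupp.single_apply])

lemma mat_c0 : matOf (X 0) (X 1) (X 2) (X 1) = (1 : Matrix (Fin 9) (Fin 9) k) := by
  ext i j
  fin_cases i <;> fin_cases j <;>
    simp [matOf, Matrix.one_apply, r0, r1, r2, r3, r4, r5, r6, r7, r8, coeff_m3_m3, m3_eq_iff]

noncomputable def genP : MvPolynomial (Fin 4 × Fin 3) k :=
  (matOf (lin fun x => X (0, x)) (lin fun x => X (1, x))
    (lin fun x => X (2, x)) (lin fun x => X (3, x))).det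

lemma eval_genP (c : Fin 4 × Fin 3 → k) :
    eval c (genP (k := k)) =
      (matOf (lin fun x => c (0, x)) (lin fun x => c (1, x))
        (lin fun x => c (2, x)) (lin fun x => c (3, x))).det := by
  rw [genP, RingHom.map_det]
  congr 1
  ext i j
  rw [RingHom.mapMatrix_apply, Matrix.map_apply, map_matOf]
  simp only [map_lin, eval_X]

noncomputable def c0 : Fin 4 × Fin 3 → k :=
  fun q => ![![1,0,0],![0,1,0],![0,0,1],![0,1,0]] q.1 q.2

lemma lin_c0 :
    lin (fun x => c0 (k := k) (0, x)) = X 0 ∧ lin (fun x => c0 (k := k) (1, x)) = X 1 ∧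
    lin (fun x => c0 (k := k) (2, x)) = X 2 ∧ lin (fun x => c0 (k := k) (3, x)) = X 1 := by
  refine ⟨?_, ?_, ?_, ?_⟩ <;> simp [lin, c0, Fin.sum_univ_three]

lemma eval_c0_genP : eval (c0 (k := k)) genP = 1 := by
  rw [eval_genP, lin_c0.1, lin_c0.2.1, lin_c0.2.2.1, lin_c0.2.2.2, mat_c0, Matrix.det_one]

lemma genP_ne_zero : (genP (k := k)) ≠ 0 := by
  intro h
  have := eval_c0_genP (k := k)
  rw [h, map_zero] at this
  exact zero_ne_one this

lemma lin_hom {n : ℕ} (c : Fin n → k) : (lin c).IsHomogeneous 1 := by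
  apply IsHomogeneous.sum
  intro i _
  simpa using (isHomogeneous_C _ (c i)).mul (isHomogeneous_X _ i)

lemma rows_li (L₁ L₂ N₁ N₂ : MvPolynomial (Fin 3) k)
    (hdet : (matOf L₁ L₂ N₁ N₂).det ≠ 0) :
    LinearIndependent k (rowsOf L₁ L₂ N₁ N₂) := by
  set Φ : MvPolynomial (Fin 3) k →ₗ[k] (Fin 9 → k) :=
    LinearMap.pi (fun j => lcoeff k (cols j)) with hΦ
  have hcomp : Φ ∘ rowsOf L₁ L₂ N₁ N₂ = fun i => matOf L₁ L₂ N₁ N₂ i := rfl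
  have li : LinearIndependent k (fun i => matOf L₁ L₂ N₁ N₂ i) :=
    Matrix.linearIndependent_rows_iff_isUnit.mpr
      ((Matrix.isUnit_iff_isUnit_det _).mpr hdet.isUnit)
  exact LinearIndependent.of_comp Φ (hcomp ▸ li)

lemma rows_mem (L₁ L₂ N₁ N₂ : MvPolynomial (Fin 3) k)
    (h₁ : L₁.IsHomogeneous 1) (h₂ : L₂.IsHomogeneous 1)
    (h₃ : N₁.IsHomogeneous 1) (h₄ : N₂.IsHomogeneous 1) (i : Fin 9) :
    rowsOf L₁ L₂ N₁ N₂ i ∈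
      Submodule.restrictScalars k
          (Ideal.span {L₁ * L₂, L₁ ^ 2} ⊔ Ideal.span {N₁ * N₂, N₁ ^ 2})
        ⊓ homogeneousSubmodule (Fin 3) k 3 := by
  have hL : (L₁ * L₂).IsHomogeneous 2 := by simpa using h₁.mul h₂
  have hL2 : (L₁ ^ 2).IsHomogeneous 2 := by simpa using h₁.pow 2
  have hN : (N₁ * N₂).IsHomogeneous 2 := by simpa using h₃.mul h₄
  have hN2 : (N₁ ^ 2).IsHomogeneous 2 := by simpa using h₃.pow 2
  have hXh : ∀ (m : Fin 3) (q : MvPolynomial (Fin 3) k), q.IsHomogeneous 2 →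
      (X m * q).IsHomogeneous 3 := fun m q hq => by
    simpa using (isHomogeneous_X k m).mul hq
  have memL : ∀ (m : Fin 3) (q : MvPolynomial (Fin 3) k), q ∈ ({L₁ * L₂, L₁ ^ 2} : Set _) →
      X m * q ∈ (Ideal.span {L₁ * L₂, L₁ ^ 2} ⊔ Ideal.span {N₁ * N₂, N₁ ^ 2} : Ideal _) :=
    fun m q hq => Ideal.mem_sup_left (Ideal.mul_mem_left _ _ (Ideal.subset_span hq))
  have memN : ∀ (m : Fin 3) (q : MvPolynomial (Fin 3) k), q ∈ ({N₁ * N₂, N₁ ^ 2} : Set _) →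
      X m * q ∈ (Ideal.span {L₁ * L₂, L₁ ^ 2} ⊔ Ideal.span {N₁ * N₂, N₁ ^ 2} : Ideal _) :=
    fun m q hq => Ideal.mem_sup_right (Ideal.mul_mem_left _ _ (Ideal.subset_span hq))
  fin_cases i <;>
    exact ⟨by first
      | exact memL _ _ (Set.mem_insert _ _)
      | exact memL _ _ (Set.mem_insert_of_mem _ rfl)
      | exact memN _ _ (Set.mem_insert _ _)
      | exact memN _ _ (Set.mem_insert_of_mem _ rfl),
    by first
      | exact hXh _ _ hL | exact hXh _ _ hL2 | exact hXh _ _ hN | exact hXh _ _ hN2⟩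

lemma lower_bound (L₁ L₂ N₁ N₂ : MvPolynomial (Fin 3) k)
    (h₁ : L₁.IsHomogeneous 1) (h₂ : L₂.IsHomogeneous 1)
    (h₃ : N₁.IsHomogeneous 1) (h₄ : N₂.IsHomogeneous 1)
    (hdet : (matOf L₁ L₂ N₁ N₂).det ≠ 0) :
    9 ≤ Module.finrank k
      ↥(Submodule.restrictScalars k
          (Ideal.span {L₁ * L₂, L₁ ^ 2} ⊔ Ideal.span {N₁ * N₂, N₁ ^ 2})
        ⊓ homogeneousSubmodule (Fin 3) k 3) := by
  set W := Submodule.restrictScalars k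
      (Ideal.span {L₁ * L₂, L₁ ^ 2} ⊔ Ideal.span {N₁ * N₂, N₁ ^ 2})
    ⊓ homogeneousSubmodule (Fin 3) k 3 with hW
  have hle : Submodule.span k (Set.range (rowsOf L₁ L₂ N₁ N₂)) ≤ W := by
    rw [Submodule.span_le]
    rintro _ ⟨i, rfl⟩
    exact rows_mem L₁ L₂ N₁ N₂ h₁ h₂ h₃ h₄ i
  haveI : FiniteDimensional k W :=
    Submodule.finiteDimensional_of_le (inf_le_right : W ≤ _)
  have := Submodule.finrank_mono hle
  rwa [finrank_span_eq_card (rows_li L₁ L₂ N₁ N₂ hdet), Fintype.card_fin] at this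

end partB

/-- In `R = k[x,y,z]`: for every choice of linear forms `L₁, L₂, N₁, N₂`, the degree-`3`
component of `(L₁L₂, L₁²) + (N₁N₂, N₁²)` has `k`-dimension at most `9` (strictly less than
`dim R₃ = 10`), and for a general choice it is exactly `9`.  By Terracini's Lemma this says
`dim σ₂(X_M) = 8 < 9` for `M = Z₁²Z₂` and `n = 3`: the `2`-defect is `1`. -/
theorem stmt10 {k : Type*} [Field k] [IsAlgClosed k] :
    (∀ L₁ L₂ N₁ N₂ : MvPolynomial (Fin 3) k,
      L₁.IsHomogeneous 1 → L₂.IsHomogeneous 1 → N₁.IsHomogeneous 1 → N₂.IsHomogeneous 1 →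
        Module.finrank k
          ↥(Submodule.restrictScalars k
              (Ideal.span {L₁ * L₂, L₁ ^ 2} ⊔ Ideal.span {N₁ * N₂, N₁ ^ 2})
            ⊓ homogeneousSubmodule (Fin 3) k 3) ≤ 9) ∧
    (∃ P : MvPolynomial (Fin 4 × Fin 3) k, P ≠ 0 ∧
      ∀ c : Fin 4 × Fin 3 → k, eval c P ≠ 0 →
        Module.finrank k
          ↥(Submodule.restrictScalars k
              (Ideal.span {lin (fun x => c (0, x)) * lin (fun x => c (1, x)),
                  lin (fun x => c (0, x)) ^ 2} ⊔
               Ideal.span {lin (fun x => c (2, x)) * lin (fun x => c (3, x)),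
                  lin (fun x => c (2, x)) ^ 2})
            ⊓ homogeneousSubmodule (Fin 3) k 3) = 9) := by
  constructor
  · intro L₁ L₂ N₁ N₂ h₁ _ h₃ _
    exact partA L₁ L₂ N₁ N₂ h₁ h₃
  · refine ⟨genP, genP_ne_zero, fun c hc => ?_⟩
    have hdet : (matOf (lin fun x => c (0, x)) (lin fun x => c (1, x))
        (lin fun x => c (2, x)) (lin fun x => c (3, x))).det ≠ 0 := by
      rwa [eval_genP] at hc
    exact le_antisymm
      (partA _ _ _ _ (lin_hom _) (lin_hom _))
      (lower_bound _ _ _ _ (lin_hom _) (lin_hom _) (lin_hom _) (lin_hom _) hdet)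
end

section
/- Let k be a field, R = k[x_1,…,x_n], and let d_1,…,d_r be positive integers with d_1+⋯+d_r = d and d > 2r. Let L_1,…,L_r, N_1,…,N_r ∈ R_1 be linear forms such that no L_i is proportional to any N_j. Set F = L_1^{d_1}⋯L_r^{d_r}, G = N_1^{d_1}⋯N_r^{d_r}, I_{P_1} = (F/L_1,…,F/L_r) and I_{P_2} = (G/N_1,…,G/N_r). Then the degree-d graded component of I_{P_1} ∩ I_{P_2} is zero; indeed every f in this component is divisible by L_1^{d_1−1}⋯L_r^{d_r−1}·N_1^{d_1−1}⋯N_r^{d_r−1}, a form of degree 2(d−r) > d. -/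
open MvPolynomial Finset
section Aux
variable {σ : Type*} [DecidableEq σ] {R : Type*} [CommSemiring R]

private lemma aux_deg_add (d e : σ →₀ ℕ) : (d + e).degree = d.degree + e.degree := by
  simp [Finsupp.degree_eq_weight_one]

private lemma aux_deg_sum_eq (d : σ →₀ ℕ) : (d.sum fun _ e => e) = d.degree := rfl

private lemma aux_coeff_eq_zero_of_lt {p : MvPolynomial σ R} {d : σ →₀ ℕ}
    (h : p.totalDegree < d.degree) : coeff d p = 0 := by
  by_contra hc
  exact absurd ((aux_deg_sum_eq d) ▸ MvPolynomial.le_totalDegree (mem_support_iff.mpr hc))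
    (not_le.mpr h)

private lemma aux_hc_top_mul (φ ψ : MvPolynomial σ R) :
    homogeneousComponent (φ.totalDegree + ψ.totalDegree) (φ * ψ) =
      homogeneousComponent φ.totalDegree φ * homogeneousComponent ψ.totalDegree ψ := by
  classical
  ext d
  rw [coeff_homogeneousComponent, coeff_mul, coeff_mul]
  split_ifs with h
  · refine Finset.sum_congr rfl fun x hx => ?_
    rw [Finset.HasAntidiagonal.mem_antidiagonal] at hx
    have hadd : x.1.degree + x.2.degree = φ.totalDegree + ψ.totalDegree := by
      rw [← h, ← hx, aux_deg_add]
    rw [coeff_homogeneousComponent, coeff_homogeneousComponent]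
    by_cases h1 : x.1.degree = φ.totalDegree
    · rw [if_pos h1, if_pos (by omega)]
    · rw [if_neg h1]
      rcases Nat.lt_or_ge x.1.degree φ.totalDegree with hlt | hge
      · have h2 : ψ.totalDegree < x.2.degree := by omega
        rw [aux_coeff_eq_zero_of_lt h2, mul_zero, ite_self, mul_zero]
      · have h2 : φ.totalDegree < x.1.degree := by omega
        rw [aux_coeff_eq_zero_of_lt h2, zero_mul, zero_mul]
  · refine (Finset.sum_eq_zero fun x hx => ?_).symm
    rw [Finset.HasAntidiagonal.mem_antidiagonal] at hx
    rw [coeff_homogeneousComponent, coeff_homogeneousComponent]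
    by_cases h1 : x.1.degree = φ.totalDegree
    · have h2 : ¬ x.2.degree = ψ.totalDegree := fun h2 => h (by rw [← hx, aux_deg_add, h1, h2])
      rw [if_pos h1, if_neg h2, mul_zero]
    · rw [if_neg h1, zero_mul]

private lemma aux_hc_top_ne_zero {φ : MvPolynomial σ R} (h : φ ≠ 0) :
    homogeneousComponent φ.totalDegree φ ≠ 0 := by
  obtain ⟨d, hd, hdeg⟩ := Finset.exists_mem_eq_sup φ.support
    (support_nonempty.mpr h) (fun s => s.sum fun _ e => e)
  intro hz
  have : coeff d (homogeneousComponent φ.totalDegree φ) = coeff d φ := by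
    rw [coeff_homogeneousComponent, if_pos (by rw [← aux_deg_sum_eq]; exact hdeg.symm ▸ rfl)]
  rw [hz] at this
  exact mem_support_iff.mp hd (by simpa using this.symm)

private lemma aux_tdeg_mul {R : Type*} [CommRing R] [IsDomain R] {φ ψ : MvPolynomial σ R}
    (hφ : φ ≠ 0) (hψ : ψ ≠ 0) :
    (φ * ψ).totalDegree = φ.totalDegree + ψ.totalDegree := by
  refine le_antisymm (totalDegree_mul φ ψ) ?_
  by_contra h
  have h2 := homogeneousComponent_eq_zero (φ := φ * ψ)
    (n := φ.totalDegree + ψ.totalDegree) (by omega)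
  rw [aux_hc_top_mul] at h2
  exact mul_ne_zero (aux_hc_top_ne_zero hφ) (aux_hc_top_ne_zero hψ) h2

private lemma aux_eq_C_of_tdeg_zero {φ : MvPolynomial σ R} (h : φ.totalDegree = 0) :
    φ = C (coeff 0 φ) := by
  classical
  have h0 := (totalDegree_eq_zero_iff σ φ).mp h
  ext m
  rw [coeff_C]
  by_cases hm : (0 : σ →₀ ℕ) = m
  · rw [if_pos hm, ← hm]
  · rw [if_neg hm]
    by_contra hc
    have : m = 0 := Finsupp.ext fun x => by simpa using h0 m (mem_support_iff.mpr hc) x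
    exact hm this.symm

private lemma aux_common_unit {K : Type*} [Field K] {L N e : MvPolynomial σ K}
    (hL : L.IsHomogeneous 1) (hN : N.IsHomogeneous 1)
    (hind : LinearIndependent K ![L, N]) (h1 : e ∣ L) (h2 : e ∣ N) : IsUnit e := by
  have hL0 : L ≠ 0 := by simpa using hind.ne_zero 0
  have hN0 : N ≠ 0 := by simpa using hind.ne_zero 1
  obtain ⟨f, hf⟩ := h1
  obtain ⟨g, hg⟩ := h2
  have he0 : e ≠ 0 := fun h => hL0 (by simp [hf, h])
  have hf0 : f ≠ 0 := fun h => hL0 (by simp [hf, h])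
  have hg0 : g ≠ 0 := fun h => hN0 (by simp [hg, h])
  have hdL : e.totalDegree + f.totalDegree = 1 := by
    rw [← aux_tdeg_mul he0 hf0, ← hf, hL.totalDegree hL0]
  have hdN : e.totalDegree + g.totalDegree = 1 := by
    rw [← aux_tdeg_mul he0 hg0, ← hg, hN.totalDegree hN0]
  rcases Nat.eq_zero_or_pos e.totalDegree with h0 | hpos
  · have := aux_eq_C_of_tdeg_zero h0
    have hc : coeff 0 e ≠ 0 := fun hc => he0 (by rw [this, hc, map_zero])
    rw [this]
    exact IsUnit.of_mul_eq_one (C (coeff 0 e)⁻¹)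
      (by rw [← C_mul, mul_inv_cancel₀ hc, C_1])
  · exfalso
    have hfd : f.totalDegree = 0 := by omega
    have hgd : g.totalDegree = 0 := by omega
    have hfc := aux_eq_C_of_tdeg_zero hfd
    have hgc := aux_eq_C_of_tdeg_zero hgd
    have hfc0 : coeff 0 f ≠ 0 := fun hc => hf0 (by rw [hfc, hc, map_zero])
    have key : (coeff 0 g / coeff 0 f) • L + (-1 : K) • N = 0 := by
      set cf := coeff 0 f with hcf
      set cg := coeff 0 g with hcg
      rw [smul_eq_C_mul, smul_eq_C_mul, hf, hg, hfc, hgc]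
      have h1 : C (cg / cf) * (e * C cf) = e * C (cg / cf * cf) := by rw [C_mul]; ring
      rw [h1, div_mul_cancel₀ _ hfc0]
      rw [map_neg, map_one]
      ring
    have hp := LinearIndependent.pair_iff.mp hind
    have h2 := (hp _ _ key).2
    norm_num at h2

private lemma aux_span_dvd_prod {k : Type*} [Field k] {n r : ℕ} (dd : Fin r → ℕ)
    (hdd : ∀ i, 0 < dd i)
    (L : Fin r → MvPolynomial (Fin n) k) {f : MvPolynomial (Fin n) k}
    (hf : f ∈ Ideal.span (Set.range fun i : Fin r =>
        L i ^ (dd i - 1) * ∏ j ∈ Finset.univ.erase i, L j ^ dd j)) :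
    (∏ i, L i ^ (dd i - 1)) ∣ f := by
  rw [← Ideal.mem_span_singleton]
  refine Ideal.span_le.mpr ?_ hf
  rintro _ ⟨i, rfl⟩
  rw [SetLike.mem_coe, Ideal.mem_span_singleton]
  refine ⟨∏ j ∈ Finset.univ.erase i, L j, ?_⟩
  have hsplit : ∀ j ∈ Finset.univ.erase i, L j ^ dd j = L j ^ (dd j - 1) * L j := by
    intro j _
    rw [← pow_succ]
    congr 1
    have := hdd j
    omega
  show L i ^ (dd i - 1) * ∏ j ∈ Finset.univ.erase i, L j ^ dd j = _
  rw [Finset.prod_congr rfl hsplit, Finset.prod_mul_distrib,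
    ← Finset.mul_prod_erase univ (fun i => L i ^ (dd i - 1)) (mem_univ i), mul_assoc]

end Aux

/-- Let `d₁ + ⋯ + d_r = d` with `d > 2r`, and let `L 1, …, L r, N 1, …, N r` be linear forms
with no `L i` proportional to any `N j`.  With `F = ∏ (L i)^{d i}`, `G = ∏ (N i)^{d i}`,
`I_{P₁} = (F/L 1, …, F/L r)` and `I_{P₂} = (G/N 1, …, G/N r)`, the degree-`d` component of
`I_{P₁} ∩ I_{P₂}` is zero; indeed every `f` in this component is divisible by
`∏ (L i)^{d i - 1} · ∏ (N i)^{d i - 1}`, a form of degree `2(d-r) > d`. -/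
theorem stmt11 {k : Type*} [Field k] {n r d : ℕ}
    (dd : Fin r → ℕ) (hdd : ∀ i, 0 < dd i) (hsum : ∑ i, dd i = d) (hd2r : 2 * r < d)
    (L N : Fin r → MvPolynomial (Fin n) k)
    (hL : ∀ i, (L i).IsHomogeneous 1) (hN : ∀ i, (N i).IsHomogeneous 1)
    (hind : ∀ i j, LinearIndependent k ![L i, N j]) :
    (Submodule.restrictScalars k
        ((Ideal.span (Set.range fun i : Fin r =>
            L i ^ (dd i - 1) * ∏ j ∈ Finset.univ.erase i, L j ^ dd j)) ⊓
         (Ideal.span (Set.range fun i : Fin r =>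
            N i ^ (dd i - 1) * ∏ j ∈ Finset.univ.erase i, N j ^ dd j)))
      ⊓ homogeneousSubmodule (Fin n) k d) = ⊥ ∧
    (∀ f ∈ Submodule.restrictScalars k
        ((Ideal.span (Set.range fun i : Fin r =>
            L i ^ (dd i - 1) * ∏ j ∈ Finset.univ.erase i, L j ^ dd j)) ⊓
         (Ideal.span (Set.range fun i : Fin r =>
            N i ^ (dd i - 1) * ∏ j ∈ Finset.univ.erase i, N j ^ dd j)))
      ⊓ homogeneousSubmodule (Fin n) k d,
      ((∏ i, L i ^ (dd i - 1)) * ∏ i, N i ^ (dd i - 1)) ∣ f) ∧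
    d < 2 * (d - r) := by
  -- arithmetic : ∑ (dd i - 1) = d - r
  have hS : (∑ i, (dd i - 1)) + r = d := by
    have : ∀ i : Fin r, (dd i - 1) + 1 = dd i := fun i => by have := hdd i; omega
    calc (∑ i, (dd i - 1)) + r = ∑ i, ((dd i - 1) + 1) := by
          rw [Finset.sum_add_distrib]
          simp [Finset.card_univ]
      _ = d := by rw [Finset.sum_congr rfl fun i _ => this i, hsum]
  have hrd : r ≤ d := by omega
  -- nonzero linear forms
  have hLne : ∀ i, L i ≠ 0 := fun i => by simpa using (hind i i).ne_zero 0
  have hNne : ∀ i, N i ≠ 0 := fun i => by simpa using (hind i i).ne_zero 1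
  -- rel primality
  have hrel : IsRelPrime (∏ i, L i ^ (dd i - 1)) (∏ i, N i ^ (dd i - 1)) := by
    refine IsRelPrime.prod_left fun i _ => IsRelPrime.prod_right fun j _ => ?_
    exact IsRelPrime.pow fun e h1 h2 => aux_common_unit (hL i) (hN j) (hind i j) h1 h2
  -- divisibility for members
  have hdvd : ∀ f ∈ Submodule.restrictScalars k
        ((Ideal.span (Set.range fun i : Fin r =>
            L i ^ (dd i - 1) * ∏ j ∈ Finset.univ.erase i, L j ^ dd j)) ⊓
         (Ideal.span (Set.range fun i : Fin r =>
            N i ^ (dd i - 1) * ∏ j ∈ Finset.univ.erase i, N j ^ dd j)))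
      ⊓ homogeneousSubmodule (Fin n) k d,
      ((∏ i, L i ^ (dd i - 1)) * ∏ i, N i ^ (dd i - 1)) ∣ f := by
    rintro f ⟨hf1, -⟩
    rw [SetLike.mem_coe, Submodule.restrictScalars_mem, Submodule.mem_inf] at hf1
    exact hrel.mul_dvd (aux_span_dvd_prod dd hdd L hf1.1) (aux_span_dvd_prod dd hdd N hf1.2)
  refine ⟨?_, hdvd, by omega⟩
  -- the degree-d component is zero
  rw [Submodule.eq_bot_iff]
  intro f hf
  have hdvdf := hdvd f hf
  obtain ⟨-, hfhom⟩ := hf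
  have hfhom' : f.IsHomogeneous d := hfhom
  by_contra hf0
  obtain ⟨g, hg⟩ := hdvdf
  have hP : (∏ i, L i ^ (dd i - 1)).IsHomogeneous (∑ i, (dd i - 1)) :=
    IsHomogeneous.prod univ _ _ fun i _ => by
      have := (hL i).pow (dd i - 1); rwa [one_mul] at this
  have hQ : (∏ i, N i ^ (dd i - 1)).IsHomogeneous (∑ i, (dd i - 1)) :=
    IsHomogeneous.prod univ _ _ fun i _ => by
      have := (hN i).pow (dd i - 1); rwa [one_mul] at this
  have hPne : (∏ i, L i ^ (dd i - 1)) ≠ 0 :=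
    Finset.prod_ne_zero_iff.mpr fun i _ => pow_ne_zero _ (hLne i)
  have hQne : (∏ i, N i ^ (dd i - 1)) ≠ 0 :=
    Finset.prod_ne_zero_iff.mpr fun i _ => pow_ne_zero _ (hNne i)
  have hPQ := hP.mul hQ
  have hPQne := mul_ne_zero hPne hQne
  have hgne : g ≠ 0 := fun h => hf0 (by rw [hg, h, mul_zero])
  have h1 : f.totalDegree = d := hfhom'.totalDegree hf0
  have h2 : f.totalDegree
      = ((∑ i, (dd i - 1)) + (∑ i, (dd i - 1))) + g.totalDegree := by
    rw [hg, aux_tdeg_mul hPQne hgne, hPQ.totalDegree hPQne]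
  omega
end

section
/- Let k be an algebraically closed field of characteristic 0. Every cubic form f ∈ k[x,y,z] defining an irreducible plane cubic curve with a double point (a nodal or cuspidal cubic) can be written as f = L_1^2 L_2 + N_1^2 N_2 for suitable linear forms L_1, L_2, N_1, N_2 ∈ k[x,y,z]. In particular, after a linear change of variables every nodal cubic is xyz − x^3 − y^3, and the substitution x = −X−Y, y = X−Y, z = −Z yields the identity xyz − x^3 − y^3 = X^2(6Y+Z) + Y^2(2Y−Z). -/
open MvPolynomial Finset

set_option linter.unusedSectionVars false
set_option linter.unusedVariables false
set_option maxHeartbeats 1000000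

namespace Stmt18Aux

variable {k : Type*} [Field k] [CharZero k]




lemma eval_aeval3 (b : Fin 3 → k) (σ : Fin 3 → MvPolynomial (Fin 3) k)
    (p : MvPolynomial (Fin 3) k) :
    eval b (aeval σ p) = eval (fun i => eval b (σ i)) p := by
  have := eval_assoc σ b p
  rw [show (eval b ∘ σ) = fun i => eval b (σ i) from rfl] at this
  rw [this, aeval_def, algebraMap_eq]

lemma aeval_aeval3 (σ τ : Fin 3 → MvPolynomial (Fin 3) k) (p : MvPolynomial (Fin 3) k) :
    aeval τ (aeval σ p) = aeval (fun i => aeval τ (σ i)) p := by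
  rw [show (aeval σ p : MvPolynomial (Fin 3) k) = bind₁ σ p from rfl, aeval_bind₁]

lemma pderiv_aeval3 (σ : Fin 3 → MvPolynomial (Fin 3) k) (i : Fin 3)
    (p : MvPolynomial (Fin 3) k) :
    pderiv i (aeval σ p) = ∑ j, aeval σ (pderiv j p) * pderiv i (σ j) := by
  induction p using MvPolynomial.induction_on with
  | C a => simp
  | add p q hp hq =>
      rw [map_add, map_add, hp, hq, ← Finset.sum_add_distrib]
      exact Finset.sum_congr rfl fun x _ => by simp [map_add, add_mul]
  | mul_X p j hp =>
      have h2 : ∀ x : Fin 3, aeval σ (pderiv x (p * X j)) * pderiv i (σ x)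
          = aeval σ (pderiv x p) * pderiv i (σ x) * σ j
            + (if x = j then aeval σ p * pderiv i (σ j) else 0) := by
        intro x
        by_cases h : x = j
        · subst h
          simp only [pderiv_mul, pderiv_X_self, mul_one, map_add, map_mul, aeval_X, if_true]
          ring
        · simp only [pderiv_mul, pderiv_X_of_ne (Ne.symm h), mul_zero, add_zero, map_mul,
            aeval_X, if_neg h, add_zero]
          ring
      rw [Finset.sum_congr rfl fun x _ => h2 x, Finset.sum_add_distrib,
        Finset.sum_ite_eq' Finset.univ j]
      simp only [Finset.mem_univ, if_true, map_mul, aeval_X, pderiv_mul, hp, Finset.sum_mul]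



noncomputable def msupp (i j l : ℕ) : Fin 3 →₀ ℕ := Finsupp.equivFunOnFinite.symm ![i, j, l]

lemma msupp_inj {i j l i' j' l' : ℕ} : msupp i j l = msupp i' j' l' ↔ (i = i' ∧ j = j' ∧ l = l') := by
  constructor
  · intro h
    exact ⟨congrArg (fun v => v 0) h, congrArg (fun v => v 1) h, congrArg (fun v => v 2) h⟩
  · rintro ⟨rfl, rfl, rfl⟩; rfl

lemma eq_msupp (v : Fin 3 →₀ ℕ) : v = msupp (v 0) (v 1) (v 2) := by
  ext x; fin_cases x <;> rfl

lemma msupp_eq_single (i j l : ℕ) :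
    msupp i j l = Finsupp.single 0 i + Finsupp.single 1 j + Finsupp.single 2 l := by
  ext x
  fin_cases x <;> simp [msupp, Finsupp.single_apply]

lemma monomial_msupp (i j l : ℕ) (r : k) :
    monomial (msupp i j l) r = C r * X 0 ^ i * X 1 ^ j * X 2 ^ l := by
  rw [msupp_eq_single, C_apply, X_pow_eq_monomial, X_pow_eq_monomial, X_pow_eq_monomial,
    monomial_mul, monomial_mul, monomial_mul]
  simp

lemma degree_three (v : Fin 3 →₀ ℕ) (h : v.degree = 3) : v 0 + v 1 + v 2 = 3 := by
  calc v 0 + v 1 + v 2 = ∑ i : Fin 3, v i := by simp [Fin.sum_univ_three]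
    _ = ∑ i ∈ v.support, v i :=
        (Finset.sum_subset (Finset.subset_univ _) (fun x _ hx => by simpa using hx)).symm
    _ = 3 := by rw [← Finsupp.degree_apply, h]

lemma expand3 (g : MvPolynomial (Fin 3) k) (hg : g.IsHomogeneous 3) :
    g = monomial (msupp 3 0 0) (coeff (msupp 3 0 0) g)
      + monomial (msupp 2 1 0) (coeff (msupp 2 1 0) g)
      + monomial (msupp 1 2 0) (coeff (msupp 1 2 0) g)
      + monomial (msupp 0 3 0) (coeff (msupp 0 3 0) g)
      + monomial (msupp 2 0 1) (coeff (msupp 2 0 1) g)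
      + monomial (msupp 1 1 1) (coeff (msupp 1 1 1) g)
      + monomial (msupp 0 2 1) (coeff (msupp 0 2 1) g)
      + monomial (msupp 1 0 2) (coeff (msupp 1 0 2) g)
      + monomial (msupp 0 1 2) (coeff (msupp 0 1 2) g)
      + monomial (msupp 0 0 3) (coeff (msupp 0 0 3) g) := by
  classical
  set S : Finset (Fin 3 →₀ ℕ) :=
    {msupp 3 0 0, msupp 2 1 0, msupp 1 2 0, msupp 0 3 0, msupp 2 0 1,
     msupp 1 1 1, msupp 0 2 1, msupp 1 0 2, msupp 0 1 2, msupp 0 0 3} with hS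
  have hsub : g.support ⊆ S := by
    intro v hv
    have h3 : v 0 + v 1 + v 2 = 3 := by
      apply degree_three
      rw [Finsupp.degree_eq_weight_one]
      exact hg (mem_support_iff.mp hv)
    rw [eq_msupp v]
    rw [hS]
    generalize v 0 = a at h3 ⊢
    generalize v 1 = b at h3 ⊢
    generalize v 2 = c at h3 ⊢
    have ha : a ≤ 3 := by omega
    have hb : b ≤ 3 := by omega
    interval_cases a <;> interval_cases b <;>
      simp [Finset.mem_insert, msupp_inj] <;> omega
  have hsum : (∑ v ∈ g.support, monomial v (coeff v g)) = ∑ v ∈ S, monomial v (coeff v g) :=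
    Finset.sum_subset hsub (fun x _ hx => by
      rw [MvPolynomial.notMem_support_iff.mp hx, map_zero])
  conv_lhs => rw [g.as_sum]
  rw [hsum, hS]
  rw [Finset.sum_insert (by simp [msupp_inj]), Finset.sum_insert (by simp [msupp_inj]),
    Finset.sum_insert (by simp [msupp_inj]), Finset.sum_insert (by simp [msupp_inj]),
    Finset.sum_insert (by simp [msupp_inj]), Finset.sum_insert (by simp [msupp_inj]),
    Finset.sum_insert (by simp [msupp_inj]), Finset.sum_insert (by simp [msupp_inj]),
    Finset.sum_insert (by simp [msupp_inj]), Finset.sum_singleton]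
  ring



lemma node_id (a' d' l1 l2 Z : k) :
    l1*l2*Z + a'*l1^3 + d'*l2^3
    = (l1+l2)^2*(Z/4 + ((2*a'-d')/4)*l1 + ((2*d'-a')/4)*l2)
      + (l1-l2)^2*(-(Z/4) + ((2*a'+d')/4)*l1 + ((2*d'+a')/4)*l2) := by
  field_simp
  ring

lemma cubic_change (a b c d pp qq uu vv x y L1 L2 : k)
    (hx : x = pp*L1 + qq*L2) (hy : y = uu*L1 + vv*L2) :
    a*x^3+b*x^2*y+c*x*y^2+d*y^3
    = (a*pp^3+b*pp^2*uu+c*pp*uu^2+d*uu^3)*L1^3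
    + (3*a*pp^2*qq + b*(pp^2*vv+2*pp*qq*uu) + c*(2*pp*uu*vv+qq*uu^2) + d*(3*uu^2*vv))*L1^2*L2
    + (3*a*pp*qq^2 + b*(qq^2*uu+2*pp*qq*vv) + c*(pp*vv^2+2*qq*uu*vv) + d*(3*uu*vv^2))*L1*L2^2
    + (a*qq^3+b*qq^2*vv+c*qq*vv^2+d*vv^3)*L2^3 := by
  subst hx hy; ring

/-- the target quantified identity -/
def SId (A B C a b c d : k) (L1 L2 N1 N2 : Fin 3 → k) : Prop :=
  ∀ p : Fin 3 → k,
    A * p 0^2 * p 2 + B * p 0 * p 1 * p 2 + C * p 1^2 * p 2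
      + a * p 0^3 + b * p 0^2 * p 1 + c * p 0 * p 1^2 + d * p 1^3
    = (L1 0 * p 0 + L1 1 * p 1 + L1 2 * p 2)^2 * (L2 0 * p 0 + L2 1 * p 1 + L2 2 * p 2)
      + (N1 0 * p 0 + N1 1 * p 1 + N1 2 * p 2)^2 * (N2 0 * p 0 + N2 1 * p 1 + N2 2 * p 2)

lemma node_case (A B C a b c d : k) (l1 l2 : Fin 2 → k)
    (hq : ∀ x y : k, A*x^2+B*x*y+C*y^2 = (l1 0*x+l1 1*y)*(l2 0*x+l2 1*y))
    (hdet : l1 0 * l2 1 - l2 0 * l1 1 ≠ 0) :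
    ∃ L1 L2 N1 N2 : Fin 3 → k, SId A B C a b c d L1 L2 N1 N2 := by
  set Δ := l1 0 * l2 1 - l2 0 * l1 1 with hΔ
  set pp := l2 1 / Δ with hpp
  set qq := -(l1 1) / Δ with hqq
  set uu := -(l2 0) / Δ with huu
  set vv := l1 0 / Δ with hvv
  set a' := a*pp^3+b*pp^2*uu+c*pp*uu^2+d*uu^3 with ha'
  set b' := 3*a*pp^2*qq + b*(pp^2*vv+2*pp*qq*uu) + c*(2*pp*uu*vv+qq*uu^2) + d*(3*uu^2*vv) with hb'
  set c' := 3*a*pp*qq^2 + b*(qq^2*uu+2*pp*qq*vv) + c*(pp*vv^2+2*qq*uu*vv) + d*(3*uu*vv^2) with hc'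
  set d' := a*qq^3+b*qq^2*vv+c*qq*vv^2+d*vv^3 with hd'
  refine ⟨![l1 0 + l2 0, l1 1 + l2 1, 0],
    ![(b'*l1 0 + c'*l2 0)/4 + ((2*a'-d')/4)*l1 0 + ((2*d'-a')/4)*l2 0,
      (b'*l1 1 + c'*l2 1)/4 + ((2*a'-d')/4)*l1 1 + ((2*d'-a')/4)*l2 1, 1/4],
    ![l1 0 - l2 0, l1 1 - l2 1, 0],
    ![-((b'*l1 0 + c'*l2 0)/4) + ((2*a'+d')/4)*l1 0 + ((2*d'+a')/4)*l2 0,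
      -((b'*l1 1 + c'*l2 1)/4) + ((2*a'+d')/4)*l1 1 + ((2*d'+a')/4)*l2 1, -(1/4)],
    fun p => ?_⟩
  set lv1 := l1 0 * p 0 + l1 1 * p 1 with hlv1
  set lv2 := l2 0 * p 0 + l2 1 * p 1 with hlv2
  have hx : p 0 = pp*lv1 + qq*lv2 := by
    rw [hlv1, hlv2, hpp, hqq]; field_simp; ring
  have hy : p 1 = uu*lv1 + vv*lv2 := by
    rw [hlv1, hlv2, huu, hvv]; field_simp; ring
  have key : A * p 0^2 * p 2 + B * p 0 * p 1 * p 2 + C * p 1^2 * p 2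
      + (a * p 0^3 + b * p 0^2 * p 1 + c * p 0 * p 1^2 + d * p 1^3)
      = lv1*lv2*(p 2 + b'*lv1 + c'*lv2) + a'*lv1^3 + d'*lv2^3 := by
    rw [cubic_change a b c d pp qq uu vv (p 0) (p 1) lv1 lv2 hx hy, ← ha', ← hb', ← hc', ← hd']
    linear_combination p 2 * hq (p 0) (p 1)
  have final := node_id a' d' lv1 lv2 (p 2 + b'*lv1 + c'*lv2)
  simp only [Matrix.cons_val_zero, Matrix.cons_val_one, Matrix.head_cons,
    Matrix.cons_val_two, Matrix.tail_cons]
  calc A * p 0^2 * p 2 + B * p 0 * p 1 * p 2 + C * p 1^2 * p 2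
      + a * p 0^3 + b * p 0^2 * p 1 + c * p 0 * p 1^2 + d * p 1^3
      = lv1*lv2*(p 2 + b'*lv1 + c'*lv2) + a'*lv1^3 + d'*lv2^3 := by linear_combination key
    _ = _ := by rw [final]; rw [hlv1, hlv2]; ring


lemma cusp_case (A B C a b c d lam : k) (l : Fin 2 → k) (m : Fin 2 → k)
    (hq : ∀ x y : k, A*x^2+B*x*y+C*y^2 = lam*(l 0*x+l 1*y)^2)
    (pp qq uu vv : k)
    (hx : ∀ x y : k, x = pp*(l 0*x+l 1*y) + qq*(m 0*x+m 1*y))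
    (hy : ∀ x y : k, y = uu*(l 0*x+l 1*y) + vv*(m 0*x+m 1*y)) :
    ∃ L1 L2 N1 N2 : Fin 3 → k, SId A B C a b c d L1 L2 N1 N2 := by
  set a' := a*pp^3+b*pp^2*uu+c*pp*uu^2+d*uu^3 with ha'
  set b' := 3*a*pp^2*qq + b*(pp^2*vv+2*pp*qq*uu) + c*(2*pp*uu*vv+qq*uu^2) + d*(3*uu^2*vv) with hb'
  set c' := 3*a*pp*qq^2 + b*(qq^2*uu+2*pp*qq*vv) + c*(pp*vv^2+2*qq*uu*vv) + d*(3*uu*vv^2) with hc'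
  set d' := a*qq^3+b*qq^2*vv+c*qq*vv^2+d*vv^3 with hd'
  refine ⟨![l 0, l 1, 0],
    ![a'*l 0 + b'*m 0, a'*l 1 + b'*m 1, lam],
    ![m 0, m 1, 0],
    ![c'*l 0 + d'*m 0, c'*l 1 + d'*m 1, 0],
    fun p => ?_⟩
  set lv := l 0 * p 0 + l 1 * p 1 with hlv
  set mv := m 0 * p 0 + m 1 * p 1 with hmv
  have key : a * p 0^3 + b * p 0^2 * p 1 + c * p 0 * p 1^2 + d * p 1^3
      = a'*lv^3 + b'*lv^2*mv + c'*lv*mv^2 + d'*mv^3 := by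
    rw [cubic_change a b c d pp qq uu vv (p 0) (p 1) lv mv (hx (p 0) (p 1)) (hy (p 0) (p 1)),
      ← ha', ← hb', ← hc', ← hd']
  simp only [Matrix.cons_val_zero, Matrix.cons_val_one, Matrix.head_cons,
    Matrix.cons_val_two, Matrix.tail_cons]
  calc A * p 0^2 * p 2 + B * p 0 * p 1 * p 2 + C * p 1^2 * p 2
      + a * p 0^3 + b * p 0^2 * p 1 + c * p 0 * p 1^2 + d * p 1^3
      = lam*lv^2*p 2 + (a'*lv^3 + b'*lv^2*mv + c'*lv*mv^2 + d'*mv^3) := by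
        linear_combination key + p 2 * hq (p 0) (p 1)
    _ = _ := by rw [hlv, hmv]; ring

lemma quad_split (A B C δ : k) (hA : A ≠ 0) (hδ : δ^2 = B^2 - 4*A*C) (x y : k) :
    A*x^2+B*x*y+C*y^2 = (x - ((-B+δ)/(2*A))*y)*(A*x - A*((-B-δ)/(2*A))*y) := by
  field_simp
  linear_combination y^2 * hδ

lemma cubic_split [IsAlgClosed k] (a b c d : k) (ha : a ≠ 0) :
    ∃ r s t : k, ∀ x y : k, a*x^3+b*x^2*y+c*x*y^2+d*y^3 = a*(x-r*y)*(x-s*y)*(x-t*y) := by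
  obtain ⟨r, hr⟩ := IsAlgClosed.exists_root
    (Polynomial.C a * Polynomial.X^3 + Polynomial.C b * Polynomial.X^2
      + Polynomial.C c * Polynomial.X + Polynomial.C d)
    (by rw [Polynomial.degree_cubic ha]; exact (by decide : (3 : WithBot ℕ) ≠ 0))
  have hr' : a*r^3 + b*r^2 + c*r + d = 0 := by
    have := hr
    simp [Polynomial.IsRoot, Polynomial.eval_add, Polynomial.eval_mul] at this
    linear_combination this
  obtain ⟨δ, hδ⟩ := IsAlgClosed.exists_pow_nat_eq ((b+a*r)^2 - 4*a*(c+b*r+a*r^2)) two_pos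
  refine ⟨r, (-(b+a*r)+δ)/(2*a), (-(b+a*r)-δ)/(2*a), fun x y => ?_⟩
  have h1 : a*(((-(b+a*r)+δ)/(2*a)) + ((-(b+a*r)-δ)/(2*a))) = -(b+a*r) := by
    field_simp; ring
  have h2 : a*(((-(b+a*r)+δ)/(2*a)) * ((-(b+a*r)-δ)/(2*a))) = c + b*r + a*r^2 := by
    field_simp
    linear_combination (-1 : k)*hδ
  set s := (-(b+a*r)+δ)/(2*a)
  set t := (-(b+a*r)-δ)/(2*a)
  linear_combination (x^2*y - r*x*y^2) * h1 + (-(x*y^2) + r*y^3) * h2 + y^3 * hr'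

lemma scalar_main [IsAlgClosed k] (A B C a b c d : k) :
    ∃ L1 L2 N1 N2 : Fin 3 → k, SId A B C a b c d L1 L2 N1 N2 := by
  by_cases hA : A = 0
  · by_cases hB : B = 0
    · by_cases hC : C = 0
      · -- pure binary cubic
        by_cases ha : a = 0
        · by_cases hb : b = 0
          · -- c = y^2 (c x + d y)
            refine ⟨![0,1,0], ![c,d,0], ![0,0,0], ![0,0,0], fun p => ?_⟩
            simp [SId, hA, hB, hC, ha, hb]
            ring
          · obtain ⟨δ', hδ'⟩ := IsAlgClosed.exists_pow_nat_eq (c^2 - 4*b*d) two_pos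
            set r' := (-c+δ')/(2*b) with hr'
            set s' := (-c-δ')/(2*b) with hs'
            refine ⟨![0,1,0], ![b*(r'-s'), -(b*(r'-s'))*r', 0], ![1,-r',0], ![0,b,0],
              fun p => ?_⟩
            have hq := quad_split b c d δ' hb hδ' (p 0) (p 1)
            simp only [SId, Matrix.cons_val_zero, Matrix.cons_val_one, Matrix.head_cons,
              Matrix.cons_val_two, Matrix.tail_cons, hA, hB, hC, ha]
            have h3 : b*p 0 - b*s'*p 1 = (b*(r'-s'))*p 1 + b*(p 0 - r'*p 1) := by ring
            linear_combination p 1 * hq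
        · obtain ⟨r, s, t, hsplit⟩ := cubic_split a b c d ha
          by_cases hrs : r = s
          · refine ⟨![1,-r,0], ![a,-(a*t),0], ![0,0,0], ![0,0,0], fun p => ?_⟩
            subst hrs
            simp only [SId, Matrix.cons_val_zero, Matrix.cons_val_one, Matrix.head_cons,
              Matrix.cons_val_two, Matrix.tail_cons, hA, hB, hC]
            linear_combination hsplit (p 0) (p 1)
          · set u := a*(s-t)/(s-r) with hu
            set v := a*(t-r)/(s-r) with hv
            refine ⟨![1,-r,0], ![u,-(u*s),0], ![1,-s,0], ![v,-(v*r),0], fun p => ?_⟩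
            have h3 : a*(p 0 - t*p 1) = u*(p 0 - r*p 1) + v*(p 0 - s*p 1) := by
              rw [hu, hv]
              have hsr : s - r ≠ 0 := sub_ne_zero.mpr (Ne.symm hrs)
              field_simp
              ring
            simp only [SId, Matrix.cons_val_zero, Matrix.cons_val_one, Matrix.head_cons,
              Matrix.cons_val_two, Matrix.tail_cons, hA, hB, hC]
            linear_combination hsplit (p 0) (p 1)
              + ((p 0 - r*p 1)*(p 0 - s*p 1)) * h3
      · -- cusp with lam = C, l = y, m = x [C ≠ 0 not needed]
        refine cusp_case A B C a b c d C ![0,1] ![1,0]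
          (fun x y => by
            simp only [Matrix.cons_val_zero, Matrix.cons_val_one, Matrix.head_cons]
            rw [hA, hB]; ring)
          0 1 1 0
          (fun x y => by simp) (fun x y => by simp)
    · -- node with l1 = y, l2 = Bx + Cy
      refine node_case A B C a b c d ![0,1] ![B,C]
        (fun x y => by
          simp only [Matrix.cons_val_zero, Matrix.cons_val_one, Matrix.head_cons]
          rw [hA]; ring)
        ?_
      simp only [Matrix.cons_val_zero, Matrix.cons_val_one, Matrix.head_cons]
      intro h; apply hB; linear_combination -h
  · obtain ⟨δ, hδ⟩ := IsAlgClosed.exists_pow_nat_eq (B^2 - 4*A*C) two_pos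
    by_cases hδ0 : δ = 0
    · -- cusp : q = A (x + B/(2A) y)^2
      subst hδ0
      have hC : C = B^2/(4*A) := by
        field_simp
        linear_combination hδ
      refine cusp_case A B C a b c d A ![1, B/(2*A)] ![0,1]
        (fun x y => by
          simp only [Matrix.cons_val_zero, Matrix.cons_val_one, Matrix.head_cons]
          rw [hC]; field_simp; ring)
        1 (-(B/(2*A))) 0 1
        (fun x y => by
          simp only [Matrix.cons_val_zero, Matrix.cons_val_one, Matrix.head_cons]
          ring)
        (fun x y => by simp)
    · -- node
      set r := (-B+δ)/(2*A) with hr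
      set s := (-B-δ)/(2*A) with hs
      refine node_case A B C a b c d ![1,-r] ![A,-(A*s)]
        (fun x y => by
          have h := quad_split A B C δ hA hδ x y
          simp only [Matrix.cons_val_zero, Matrix.cons_val_one, Matrix.head_cons]
          rw [hr, hs]
          linear_combination h)
        ?_
      simp only [Matrix.cons_val_zero, Matrix.cons_val_one, Matrix.head_cons]
      have : 1 * -(A*s) - A * -r = δ := by
        rw [hr, hs]; field_simp; ring
      rw [this]
      exact hδ0




noncomputable def e₂ : Fin 3 → k := fun j => if j = 2 then 1 else 0

lemma exists_coords (a : Fin 3 → k) (ha : a ≠ 0) :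
    ∃ σ τ : Fin 3 → MvPolynomial (Fin 3) k,
      (∀ i, (σ i).IsHomogeneous 1) ∧ (∀ i, (τ i).IsHomogeneous 1) ∧
      (∀ i, aeval τ (σ i) = X i) ∧
      (∀ i, eval (e₂ : Fin 3 → k) (σ i) = a i) := by
  have hcase : a 0 ≠ 0 ∨ a 1 ≠ 0 ∨ a 2 ≠ 0 := by
    by_contra h
    push_neg at h
    apply ha
    funext i
    fin_cases i <;> simp [h.1, h.2.1, h.2.2]
  have hX : ∀ i : Fin 3, (X i : MvPolynomial (Fin 3) k).IsHomogeneous 1 :=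
    fun i => isHomogeneous_X k i
  have hCX : ∀ (r : k) (i : Fin 3), (C r * X i : MvPolynomial (Fin 3) k).IsHomogeneous 1 :=
    fun r i => isHomogeneous_C_mul_X r i
  rcases hcase with h | h | h
  · refine ⟨![C (a 0) * X 2, X 0 + C (a 1) * X 2, X 1 + C (a 2) * X 2],
      ![X 1 - C (a 1 / a 0) * X 0, X 2 - C (a 2 / a 0) * X 0, C ((a 0)⁻¹) * X 0], ?_, ?_, ?_, ?_⟩
    · intro i; fin_cases i
      · exact hCX _ _
      · exact (hX 0).add (hCX _ _)
      · exact (hX 1).add (hCX _ _)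
    · intro i; fin_cases i
      · exact (hX 1).sub (hCX _ _)
      · exact (hX 2).sub (hCX _ _)
      · exact hCX _ _
    · 
      intro i
      apply MvPolynomial.funext
      intro x
      rw [eval_aeval3]
      fin_cases i <;>
        · simp
          try field_simp
          try ring
    · intro i; fin_cases i <;> simp [e₂]
  · refine ⟨![C (a 0) * X 2 + X 0, C (a 1) * X 2, X 1 + C (a 2) * X 2],
      ![X 0 - C (a 0 / a 1) * X 1, X 2 - C (a 2 / a 1) * X 1, C ((a 1)⁻¹) * X 1], ?_, ?_, ?_, ?_⟩
    · intro i; fin_cases i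
      · exact (hCX _ _).add (hX 0)
      · exact hCX _ _
      · exact (hX 1).add (hCX _ _)
    · intro i; fin_cases i
      · exact (hX 0).sub (hCX _ _)
      · exact (hX 2).sub (hCX _ _)
      · exact hCX _ _
    · 
      intro i
      apply MvPolynomial.funext
      intro x
      rw [eval_aeval3]
      fin_cases i <;>
        · simp
          try field_simp
          try ring
    · intro i; fin_cases i <;> simp [e₂]
  · refine ⟨![X 0 + C (a 0) * X 2, X 1 + C (a 1) * X 2, C (a 2) * X 2],
      ![X 0 - C (a 0 / a 2) * X 2, X 1 - C (a 1 / a 2) * X 2, C ((a 2)⁻¹) * X 2], ?_, ?_, ?_, ?_⟩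
    · intro i; fin_cases i
      · exact (hX 0).add (hCX _ _)
      · exact (hX 1).add (hCX _ _)
      · exact hCX _ _
    · intro i; fin_cases i
      · exact (hX 0).sub (hCX _ _)
      · exact (hX 1).sub (hCX _ _)
      · exact hCX _ _
    · 
      intro i
      apply MvPolynomial.funext
      intro x
      rw [eval_aeval3]
      fin_cases i <;>
        · simp
          try field_simp
          try ring
    · intro i; fin_cases i <;> simp [e₂]

lemma main_g [IsAlgClosed k] (g : MvPolynomial (Fin 3) k) (hg3 : g.IsHomogeneous 3)
    (h0 : eval (e₂ : Fin 3 → k) g = 0) (hd0 : eval (e₂ : Fin 3 → k) (pderiv 0 g) = 0)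
    (hd1 : eval (e₂ : Fin 3 → k) (pderiv 1 g) = 0) :
    ∃ L₁ L₂ N₁ N₂ : MvPolynomial (Fin 3) k,
      L₁.IsHomogeneous 1 ∧ L₂.IsHomogeneous 1 ∧ N₁.IsHomogeneous 1 ∧ N₂.IsHomogeneous 1 ∧
      g = L₁ ^ 2 * L₂ + N₁ ^ 2 * N₂ := by
  have hexp := expand3 g hg3
  rw [monomial_msupp, monomial_msupp, monomial_msupp, monomial_msupp, monomial_msupp,
    monomial_msupp, monomial_msupp, monomial_msupp, monomial_msupp, monomial_msupp] at hexp
  set a := coeff (msupp 3 0 0) g with ha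
  set b := coeff (msupp 2 1 0) g with hb
  set c := coeff (msupp 1 2 0) g with hc
  set d := coeff (msupp 0 3 0) g with hd
  set A := coeff (msupp 2 0 1) g with hA
  set B := coeff (msupp 1 1 1) g with hB
  set CC := coeff (msupp 0 2 1) g with hCC
  set D := coeff (msupp 1 0 2) g with hD
  set E := coeff (msupp 0 1 2) g with hE
  set F := coeff (msupp 0 0 3) g with hF
  rw [hexp] at h0 hd0 hd1
  simp [e₂] at h0 hd0 hd1
  obtain ⟨L1, L2, N1, N2, hid⟩ := scalar_main A B CC a b c d
  refine ⟨C (L1 0) * X 0 + C (L1 1) * X 1 + C (L1 2) * X 2,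
    C (L2 0) * X 0 + C (L2 1) * X 1 + C (L2 2) * X 2,
    C (N1 0) * X 0 + C (N1 1) * X 1 + C (N1 2) * X 2,
    C (N2 0) * X 0 + C (N2 1) * X 1 + C (N2 2) * X 2, ?_, ?_, ?_, ?_, ?_⟩
  · exact ((isHomogeneous_C_mul_X _ _).add (isHomogeneous_C_mul_X _ _)).add
      (isHomogeneous_C_mul_X _ _)
  · exact ((isHomogeneous_C_mul_X _ _).add (isHomogeneous_C_mul_X _ _)).add
      (isHomogeneous_C_mul_X _ _)
  · exact ((isHomogeneous_C_mul_X _ _).add (isHomogeneous_C_mul_X _ _)).add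
      (isHomogeneous_C_mul_X _ _)
  · exact ((isHomogeneous_C_mul_X _ _).add (isHomogeneous_C_mul_X _ _)).add
      (isHomogeneous_C_mul_X _ _)
  · apply MvPolynomial.funext
    intro x
    rw [hexp]
    have hx := hid x
    simp only [map_add, map_mul, map_pow, eval_C, eval_X, pow_zero, mul_one, pow_one]
    linear_combination hx + (x 0 * x 2^2) * hd0 + (x 1 * x 2^2) * hd1 + (x 2^3) * h0

end Stmt18Aux

open Stmt18Aux

/-- Over an algebraically closed field of characteristic `0`, every cubic form
`f ∈ k[x,y,z]` defining an irreducible plane cubic curve with a double point (i.e. `f` is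
irreducible and the curve has a singular point — a nodal or cuspidal cubic) can be written
as `f = L₁²L₂ + N₁²N₂` for suitable linear forms `L₁, L₂, N₁, N₂`.  Moreover the
substitution `x = -X-Y`, `y = X-Y`, `z = -Z` applied to the nodal normal form
`xyz - x³ - y³` yields the identity `xyz - x³ - y³ = X²(6Y+Z) + Y²(2Y-Z)`. -/
theorem stmt18 {k : Type*} [Field k] [IsAlgClosed k] [CharZero k]
    (f : MvPolynomial (Fin 3) k) (hf : f.IsHomogeneous 3) (hirr : Irreducible f)
    (hsing : ∃ a : Fin 3 → k, a ≠ 0 ∧ eval a f = 0 ∧ ∀ i, eval a (pderiv i f) = 0) :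
    (∃ L₁ L₂ N₁ N₂ : MvPolynomial (Fin 3) k,
      L₁.IsHomogeneous 1 ∧ L₂.IsHomogeneous 1 ∧ N₁.IsHomogeneous 1 ∧ N₂.IsHomogeneous 1 ∧
      f = L₁ ^ 2 * L₂ + N₁ ^ 2 * N₂) ∧
    ((-X 0 - X 1) * (X 0 - X 1) * (-X 2) - (-X 0 - X 1) ^ 3 - (X 0 - X 1) ^ 3
        : MvPolynomial (Fin 3) k)
      = X 0 ^ 2 * (6 * X 1 + X 2) + X 1 ^ 2 * (2 * X 1 - X 2) := by
  constructor
  · obtain ⟨a, ha0, haf, had⟩ := hsing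
    obtain ⟨σ, τ, hσ, hτ, hcomp, hevalσ⟩ := exists_coords a ha0
    set g := aeval σ f with hgdef
    have hg3 : g.IsHomogeneous 3 := by
      have := hf.aeval σ hσ
      rwa [one_mul] at this
    have hfg : aeval τ g = f := by
      rw [hgdef, aeval_aeval3, show (fun i => aeval τ (σ i)) = X from funext hcomp,
        aeval_X_left_apply]
    have hσa : (fun i => eval (e₂ : Fin 3 → k) (σ i)) = a := funext hevalσ
    have h0 : eval (e₂ : Fin 3 → k) g = 0 := by
      rw [hgdef, eval_aeval3, hσa, haf]
    have hdall : ∀ i, eval (e₂ : Fin 3 → k) (pderiv i g) = 0 := by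
      intro i
      rw [hgdef, pderiv_aeval3, map_sum]
      apply Finset.sum_eq_zero
      intro j _
      rw [map_mul, eval_aeval3, hσa, had j, zero_mul]
    obtain ⟨L₁, L₂, N₁, N₂, h1, h2, h3, h4, hrep⟩ := main_g g hg3 h0 (hdall 0) (hdall 1)
    refine ⟨aeval τ L₁, aeval τ L₂, aeval τ N₁, aeval τ N₂, ?_, ?_, ?_, ?_, ?_⟩
    · have := h1.aeval τ hτ; rwa [one_mul] at this
    · have := h2.aeval τ hτ; rwa [one_mul] at this
    · have := h3.aeval τ hτ; rwa [one_mul] at this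
    · have := h4.aeval τ hτ; rwa [one_mul] at this
    · rw [← hfg, hrep]
      simp [map_add, map_mul, map_pow]
  · ring
end

section
/- Let k be a field of characteristic different from 2 and R = k[x,y,z]. Then the monomial xyz has Z_1^2Z_2-rank equal to 2: on the one hand 4xyz = x(y+z)^2 − x(y−z)^2, so xyz is a sum of two terms of the form L^2N with L, N linear forms; on the other hand there exist no linear forms L, N ∈ R_1 with xyz = L^2N, so the rank is not 1. -/
open MvPolynomial Finset

private lemma primeX19 {k : Type*} [Field k] (i : Fin 3) :
    Prime (X i : MvPolynomial (Fin 3) k) := by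
  have h0 : Prime (X 0 : MvPolynomial (Fin 3) k) := by
    rw [← MulEquiv.prime_iff (MvPolynomial.finSuccEquiv k 2).toMulEquiv]
    simpa [MvPolynomial.finSuccEquiv_X_zero] using
      Polynomial.prime_X (R := MvPolynomial (Fin 2) k)
  have := (MulEquiv.prime_iff (renameEquiv k (Equiv.swap (0 : Fin 3) i)).toMulEquiv).mpr h0
  simpa using this

private lemma notdvd19 {k : Type*} [Field k] (i j l : Fin 3) (hij : i ≠ j) (hil : i ≠ l) :
    ¬ (X i : MvPolynomial (Fin 3) k) ^ 2 ∣ X i * (X j * X l) := by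
  rintro ⟨c, hc⟩
  have h1 : (X j * X l : MvPolynomial (Fin 3) k) = X i * c :=
    mul_left_cancel₀ (X_ne_zero i) (by linear_combination hc)
  have hdvd : (X i : MvPolynomial (Fin 3) k) ∣ X j * X l := ⟨c, h1⟩
  rcases (primeX19 i).dvd_mul.mp hdvd with h | h
  · exact hij (X_dvd_X.mp h)
  · exact hil (X_dvd_X.mp h)

/-- Over a field of characteristic `≠ 2`, the monomial `xyz ∈ k[x,y,z]` has
`Z₁²Z₂`-rank equal to `2`: one has `4xyz = x(y+z)² - x(y-z)²`, so `xyz` is a sum of two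
expressions of the form `L²N` with `L, N` linear forms, while `xyz` cannot be written as a
single such expression `L²N`. -/
theorem stmt19 {k : Type*} [Field k] (h2 : (2 : k) ≠ 0) :
    ((4 : MvPolynomial (Fin 3) k) * (X 0 * X 1 * X 2)
        = X 0 * (X 1 + X 2) ^ 2 - X 0 * (X 1 - X 2) ^ 2) ∧
    (∃ L₁ N₁ L₂ N₂ : MvPolynomial (Fin 3) k,
      L₁.IsHomogeneous 1 ∧ N₁.IsHomogeneous 1 ∧ L₂.IsHomogeneous 1 ∧ N₂.IsHomogeneous 1 ∧
      (X 0 * X 1 * X 2 : MvPolynomial (Fin 3) k) = L₁ ^ 2 * N₁ + L₂ ^ 2 * N₂) ∧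
    ¬∃ L N : MvPolynomial (Fin 3) k, L.IsHomogeneous 1 ∧ N.IsHomogeneous 1 ∧
      (X 0 * X 1 * X 2 : MvPolynomial (Fin 3) k) = L ^ 2 * N := by
  have h4 : (4 : k) ≠ 0 := by
    have : (4 : k) = 2 * 2 := by norm_num
    rw [this]; exact mul_ne_zero h2 h2
  refine ⟨by ring, ?_, ?_⟩
  · refine ⟨X 1 + X 2, C (4⁻¹ : k) * X 0, X 1 - X 2, -(C (4⁻¹ : k) * X 0), ?_, ?_, ?_, ?_, ?_⟩
    · exact (isHomogeneous_X k 1).add (isHomogeneous_X k 2)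
    · exact (isHomogeneous_C _ _).mul (isHomogeneous_X k 0)
    · exact (isHomogeneous_X k 1).sub (isHomogeneous_X k 2)
    · exact ((isHomogeneous_C _ _).mul (isHomogeneous_X k 0)).neg
    · have hc : (C (4⁻¹ : k) * 4 : MvPolynomial (Fin 3) k) = 1 := by
        have h : ((4 : MvPolynomial (Fin 3) k)) = C (4 : k) := by
          simp [map_ofNat]
        rw [h, ← C_mul, inv_mul_cancel₀ h4, C_1]
      linear_combination (-(X 0 * X 1 * X 2 : MvPolynomial (Fin 3) k)) * hc
  · rintro ⟨L, N, hL, hN, heq⟩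
    have hL0 : L ≠ 0 := by
      rintro rfl; simp at heq
    have hLu : ¬ IsUnit L := by
      intro hu
      have h1 : IsUnit (constantCoeff L) := hu.map constantCoeff
      have hc0 : constantCoeff L = 0 := by
        rw [constantCoeff_eq]
        exact hL.coeff_eq_zero (by simp)
      rw [hc0] at h1
      exact not_isUnit_zero h1
    obtain ⟨q, hqirr, hqdvd⟩ := WfDvdMonoid.exists_irreducible_factor hLu hL0
    have hq : Prime q := (UniqueFactorizationMonoid.irreducible_iff_prime).mp hqirr
    have hq2 : q ^ 2 ∣ (X 0 * X 1 * X 2 : MvPolynomial (Fin 3) k) := by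
      rw [heq]; exact Dvd.dvd.mul_right (pow_dvd_pow_of_dvd hqdvd 2) N
    have hqd : q ∣ (X 0 * X 1 * X 2 : MvPolynomial (Fin 3) k) :=
      (dvd_pow_self q two_ne_zero).trans hq2
    have hex : ∃ i : Fin 3, q ∣ X i := by
      rcases hq.dvd_mul.mp hqd with h | h
      · rcases hq.dvd_mul.mp h with h' | h'
        · exact ⟨0, h'⟩
        · exact ⟨1, h'⟩
      · exact ⟨2, h⟩
    obtain ⟨i, hqi⟩ := hex
    have hassoc : Associated q (X i) := hq.associated_of_dvd (primeX19 i) hqi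
    have hXi2 : (X i : MvPolynomial (Fin 3) k) ^ 2 ∣ X 0 * X 1 * X 2 :=
      (Associated.pow_pow (n := 2) hassoc.symm).dvd.trans hq2
    fin_cases i
    · refine notdvd19 (k := k) 0 1 2 (by decide) (by decide) ?_
      have h := hXi2; rw [mul_assoc] at h; exact h
    · refine notdvd19 (k := k) 1 0 2 (by decide) (by decide) ?_
      have h := hXi2
      rw [show (X 0 * X 1 * X 2 : MvPolynomial (Fin 3) k) = X 1 * (X 0 * X 2) by ring] at h
      exact h
    · refine notdvd19 (k := k) 2 0 1 (by decide) (by decide) ?_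
      have h := hXi2
      rw [show (X 0 * X 1 * X 2 : MvPolynomial (Fin 3) k) = X 2 * (X 0 * X 1) by ring] at h
      exact h
end
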